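/- arXiv:1011.1157 — 6 statements merged into one kernel-verified Lean document; each statement's English description precedes it below -/
import Mathlib

section
/- Let n be a positive integer, let 0 < i < j < k ≤ n, let τ = τ_{i,j,k} and write q = k+i−j. Then for all u, v ∈ {0,…,n} with u < v: (1) τ(u) > τ(v) if and only if i ≤ u < q and q ≤ v < k; and (2) τ^{−1}(u) > τ^{−1}(v) if and only if i ≤ u < j and j ≤ v < k. -/
/- ----------------------------------------------------------------------
  Common definitions for the formalization of
  "Sorting by Transpositions is Difficult" (Bulteau, Fertin, Rusu).

  Permutations of {0,…,n} are represented as functions ℕ → ℕ that are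
  bijections of the set {0,…,n} (everything above n is irrelevant /
  fixed).
---------------------------------------------------------------------- -/

set_option autoImplicit false

/-- The transposition `τ_{i,j,k}`, as a function on `ℕ`
(for `0 < i < j < k ≤ n` it is a permutation of `{0,…,n}`,
fixing everything `≥ k`). Here `q = k + i - j`. -/
def tau (i j k x : ℕ) : ℕ :=
  if x < i then x
  else if x < k + i - j then x + j - i
  else if x < k then x + j - k
  else x

/-- The inverse transposition `τ_{i,j,k}⁻¹ = τ_{i,k+i-j,k}`. -/
def tauInv (i j k x : ℕ) : ℕ := tau i (k + i - j) k x

def min3 (p q r : ℕ) : ℕ := min p (min q r)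

def max3 (p q r : ℕ) : ℕ := max p (max q r)

/-- the middle value of three (pairwise distinct) values -/
def mid3 (p q r : ℕ) : ℕ := p + q + r - min3 p q r - max3 p q r

/-- The triple of positions `(p,q,r)` is *well-ordered*:
one of `p<q<r`, `q<r<p`, `r<p<q` holds. -/
def WellOrdered3 (p q r : ℕ) : Prop :=
  (p < q ∧ q < r) ∨ (q < r ∧ r < p) ∨ (r < p ∧ p < q)

/-- The transposition `τ[a,b,c,ψ]` associated with a (well-ordered) triple
whose `ψ`-positions are `(p,q,r)`: it is `τ_{i,j,k}` for `(i,j,k)` the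
sorted sequence of `(p,q,r)`. -/
def tauStep (p q r x : ℕ) : ℕ := tau (min3 p q r) (mid3 p q r) (max3 p q r) x

/-- the inverse of `τ[a,b,c,ψ]` -/
def tauInvStep (p q r x : ℕ) : ℕ := tauInv (min3 p q r) (mid3 p q r) (max3 p q r) x

/-- the number of breakpoints `d_b(π)` of `π` as a permutation of `{0,…,n}`:
the number of `x ∈ {1,…,n}` such that `(x-1,x)` is not an adjacency,
i.e. `π x ≠ π (x-1) + 1`. -/
def db (n : ℕ) (π : ℕ → ℕ) : ℕ :=
  ((Finset.Icc 1 n).filter fun x => π x ≠ π (x - 1) + 1).card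

/-- a triple `(i,j,k)` of integers coding a transposition of `{0,…,n}` -/
def IsTransp (n : ℕ) (t : ℕ × ℕ × ℕ) : Prop :=
  0 < t.1 ∧ t.1 < t.2.1 ∧ t.2.1 < t.2.2 ∧ t.2.2 ≤ n

/-- `π` can be sorted by `m` transpositions:
there are transpositions `τ_1,…,τ_m` with `π ∘ τ_m ∘ ⋯ ∘ τ_1 = Id` on `{0,…,n}`.
(`d_t(π)` is the least such `m`.) -/
def SortsIn (n : ℕ) (π : ℕ → ℕ) (m : ℕ) : Prop :=
  ∃ L : List (ℕ × ℕ × ℕ), L.length = m ∧ (∀ t ∈ L, IsTransp n t) ∧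
    ∀ x ≤ n, π (L.foldl (fun y t => tau t.1 t.2.1 t.2.2 y) x) = x

/-- the three elements of an ordered triple, as a finite set -/
def trElems {α : Type*} [DecidableEq α] (t : α × α × α) : Finset α := {t.1, t.2.1, t.2.2}

/-- A 3DT-instance `I = ⟨Σ, T, ψ⟩` of span `n`: an alphabet `Sig`,
a set `T` of ordered triples partitioning `Sig`, and an injection
`ψ : Sig → {1,…,n}`. -/
structure TDT (α : Type*) [DecidableEq α] (n : ℕ) where
  Sig : Finset α
  T : Finset (α × α × α)
  psi : α → ℕ
  mem_T : ∀ t ∈ T, t.1 ∈ Sig ∧ t.2.1 ∈ Sig ∧ t.2.2 ∈ Sig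
  cover : ∀ σ ∈ Sig, ∃ t ∈ T, σ ∈ trElems t
  nodup_T : ∀ t ∈ T, t.1 ≠ t.2.1 ∧ t.1 ≠ t.2.2 ∧ t.2.1 ≠ t.2.2
  disj_T : ∀ t ∈ T, ∀ t' ∈ T, t ≠ t' → Disjoint (trElems t) (trElems t')
  psi_mem : ∀ σ ∈ Sig, psi σ ∈ Finset.Icc 1 n
  psi_inj : Set.InjOn psi ↑Sig

namespace TDT

variable {α : Type*} [DecidableEq α] {n : ℕ}

/-- the domain `L = ψ(Σ)` of a 3DT-instance -/
def dom (I : TDT α n) : Finset ℕ := I.Sig.image I.psi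

/-- a triple of `T` is well-ordered -/
def WellOrderedT (I : TDT α n) (t : α × α × α) : Prop :=
  WellOrdered3 (I.psi t.1) (I.psi t.2.1) (I.psi t.2.2)

/-- the transposition `τ[a,b,c,ψ]` associated with a well-ordered triple -/
def tauOf (I : TDT α n) (t : α × α × α) (x : ℕ) : ℕ :=
  tauStep (I.psi t.1) (I.psi t.2.1) (I.psi t.2.2) x

/-- the inverse of `τ[a,b,c,ψ]` -/
def tauOfInv (I : TDT α n) (t : α × α × α) (x : ℕ) : ℕ :=
  tauInvStep (I.psi t.1) (I.psi t.2.1) (I.psi t.2.2) x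

end TDT

/-- a *variable*: a pair of triples `[(a,b,c),(x,y,z)]` -/
abbrev Var (α : Type*) : Type _ := (α × α × α) × (α × α × α)

section Main

variable {α : Type*} [DecidableEq α]

/-- The 3DT-step `I →(a,b,c) I'` (only defined when `(a,b,c)` is a
well-ordered triple of `T`): the triple is removed and `ψ` is composed
with `τ[a,b,c,ψ]⁻¹`. -/
def StepT {n : ℕ} (t : α × α × α) (I I' : TDT α n) : Prop :=
  t ∈ I.T ∧ I.WellOrderedT t ∧
  I'.Sig = I.Sig \ trElems t ∧
  I'.T = I.T.erase t ∧
  ∀ σ ∈ I'.Sig, I'.psi σ = I.tauOfInv t (I.psi σ)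

/-- `I` is 3DT-collapsible: some sequence of 3DT-steps reduces it to the
empty instance. -/
def Collapsible {n : ℕ} (I : TDT α n) : Prop :=
  ∃ J : TDT α n,
    Relation.ReflTransGen (fun X Y => ∃ t, StepT t X Y) I J ∧ J.Sig = ∅ ∧ J.T = ∅

/-- `I ∼ π` : the 3DT-instance `I` (of span `n`) and the permutation `π` of
`{0,…,n}` are equivalent: `π 0 = 0`, `π v = π (v-1) + 1` for `v ∉ L`, and
`π v = π (succ_I⁻¹ v - 1) + 1` for `v ∈ L` (expressed triple by triple). -/
def EquivPerm {n : ℕ} (I : TDT α n) (π : ℕ → ℕ) : Prop :=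
  π 0 = 0 ∧
  (∀ v, 1 ≤ v → v ≤ n → v ∉ I.dom → π v = π (v - 1) + 1) ∧
  ∀ t ∈ I.T,
    π (I.psi t.2.1) = π (I.psi t.1 - 1) + 1 ∧
    π (I.psi t.2.2) = π (I.psi t.2.1 - 1) + 1 ∧
    π (I.psi t.1) = π (I.psi t.2.2 - 1) + 1

/-- `(s 1, …, s l)` is an `l`-block-decomposition of span `n` -/
def IsBlockDec (n l : ℕ) (s : ℕ → ℕ) : Prop :=
  s 1 = 0 ∧ (∀ h, 1 ≤ h → h < l → s h < s (h + 1)) ∧ s l < n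

/-- `t_h`: the right end of block `h` (`t_h = s_{h+1}` for `h < l`, `t_l = n`) -/
def tEnd (n l : ℕ) (s : ℕ → ℕ) (h : ℕ) : ℕ := if h = l then n else s (h + 1)

/-- position `p` lies in block `h`, i.e. `p ∈ {s_h + 1, …, t_h}` -/
def InBlock (n l : ℕ) (s : ℕ → ℕ) (h p : ℕ) : Prop := s h < p ∧ p ≤ tEnd n l s h

/-- a triple of `T` is *internal* (all three elements in one block) -/
def InternalT (n l : ℕ) (I : TDT α n) (s : ℕ → ℕ) (t : α × α × α) : Prop :=
  ∃ h, 1 ≤ h ∧ h ≤ l ∧ InBlock n l s h (I.psi t.1) ∧ InBlock n l s h (I.psi t.2.1) ∧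
    InBlock n l s h (I.psi t.2.2)

/-- block conditions (C2)–(C3) of a variable `[(a,b,c),(x,y,z)]`:
`b,x,y` lie in the source block `h0` and `a,c,z` lie in the target block
`h1 ≠ h0`. -/
def VarBlocksAt (n l : ℕ) (I : TDT α n) (s : ℕ → ℕ) (h0 h1 : ℕ) (a b c x y z : α) : Prop :=
  (a, b, c) ∈ I.T ∧ (x, y, z) ∈ I.T ∧
  1 ≤ h0 ∧ h0 ≤ l ∧ 1 ≤ h1 ∧ h1 ≤ l ∧ h1 ≠ h0 ∧
  InBlock n l s h0 (I.psi b) ∧ InBlock n l s h0 (I.psi x) ∧ InBlock n l s h0 (I.psi y) ∧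
  InBlock n l s h1 (I.psi a) ∧ InBlock n l s h1 (I.psi c) ∧ InBlock n l s h1 (I.psi z)

/-- the variable `[(a,b,c),(x,y,z)]` is *valid*, with source `h0` and target `h1`:
conditions (C2)–(C5). -/
def ValidVarAt (n l : ℕ) (I : TDT α n) (s : ℕ → ℕ) (h0 h1 : ℕ) (a b c x y z : α) : Prop :=
  VarBlocksAt n l I s h0 h1 a b c x y z ∧
  (I.psi x < I.psi y →
    I.psi x < I.psi b ∧ I.psi b < I.psi y ∧
      ∀ σ ∈ I.Sig, I.psi x < I.psi σ → I.psi σ < I.psi y → σ = b) ∧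
  I.psi a < I.psi z ∧ I.psi z < I.psi c

/-- the variable `[(a,b,c),(x,y,z)]` is valid in the block decomposition `s` -/
def ValidVar (n l : ℕ) (I : TDT α n) (s : ℕ → ℕ) (a b c x y z : α) : Prop :=
  ∃ h0 h1, ValidVarAt n l I s h0 h1 a b c x y z

/-- validity of a variable given as a pair of triples -/
def ValidVarV (n l : ℕ) (I : TDT α n) (s : ℕ → ℕ) (V : Var α) : Prop :=
  ValidVar n l I s V.1.1 V.1.2.1 V.1.2.2 V.2.1 V.2.2.1 V.2.2.2

/-- conditions (C2)–(C3) only, of a variable given as a pair of triples -/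
def VarC23V (n l : ℕ) (I : TDT α n) (s : ℕ → ℕ) (V : Var α) : Prop :=
  ∃ h0 h1, VarBlocksAt n l I s h0 h1 V.1.1 V.1.2.1 V.1.2.2 V.2.1 V.2.2.1 V.2.2.2

/-- the external triples of `(I,s)` are partitioned into the set `𝒜` of
variables, each satisfying the property `P`. -/
def PartitionIntoVars (n l : ℕ) (I : TDT α n) (s : ℕ → ℕ) (P : Var α → Prop)
    (𝒜 : Finset (Var α)) : Prop :=
  (∀ V ∈ 𝒜, P V) ∧
  (∀ V ∈ 𝒜, V.1 ≠ V.2) ∧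
  (∀ V ∈ 𝒜, ∀ W ∈ 𝒜, V ≠ W → V.1 ≠ W.1 ∧ V.1 ≠ W.2 ∧ V.2 ≠ W.1 ∧ V.2 ≠ W.2) ∧
  (∀ V ∈ 𝒜, ¬ InternalT n l I s V.1 ∧ ¬ InternalT n l I s V.2) ∧
  ∀ t ∈ I.T, ¬ InternalT n l I s t → ∃ V ∈ 𝒜, t = V.1 ∨ t = V.2

/-- `(I,s)` is a *valid context* -/
def ValidContext (n l : ℕ) (I : TDT α n) (s : ℕ → ℕ) : Prop :=
  IsBlockDec n l s ∧ ∃ 𝒜, PartitionIntoVars n l I s (ValidVarV n l I s) 𝒜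

/-- a 3DT-step on an instance together with an `l`-block-decomposition:
`(I,B) →(t) (I',B')` with `B' = τ⁻¹[B]`. -/
def StepB (n l : ℕ) (t : α × α × α) (P P' : TDT α n × (ℕ → ℕ)) : Prop :=
  StepT t P.1 P'.1 ∧ IsBlockDec n l P'.2 ∧
  ∀ h, 1 ≤ h → h ≤ l → P'.2 h = P.1.tauOfInv t (P.2 h)

/-- From the state `st`, the triple `v` (of some variable) can be activated,
possibly after some 3DT-steps using only the internal triples in `ints`. -/
def CanActivate (n l : ℕ) (ints : Set (α × α × α)) (v : α × α × α)
    (st : TDT α n × (ℕ → ℕ)) : Prop :=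
  ∃ (m : ℕ) (c : ℕ → TDT α n × (ℕ → ℕ)) (tr : ℕ → α × α × α),
    c 0 = st ∧ (∀ p ≤ m, StepB n l (tr p) (c p) (c (p + 1))) ∧
    (∀ p < m, tr p ∈ ints) ∧ tr m = v

/-- the block `h` of `(I,s)` reads (in increasing `ψ`-order) exactly as the
word `w`. -/
def BlockWord (n l : ℕ) (I : TDT α n) (s : ℕ → ℕ) (h : ℕ) (w : List α) : Prop :=
  w.Chain' (fun u v => I.psi u < I.psi v) ∧
  (∀ σ ∈ w, σ ∈ I.Sig ∧ InBlock n l s h (I.psi σ)) ∧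
  ∀ σ ∈ I.Sig, InBlock n l s h (I.psi σ) → σ ∈ w

/-- the block `h` is the block `[A1,A2] = copy(A)`,
with word `a y1 e z d y2 x1 b1 c x2 b2 f`. -/
def IsCopyBlock (n l : ℕ) (I : TDT α n) (s : ℕ → ℕ) (h : ℕ) (A A1 A2 : Var α)
    (d e f : α) : Prop :=
  (d, e, f) ∈ I.T ∧
  BlockWord n l I s h
    [A.1.1, A1.2.2.1, e, A.2.2.2, d, A2.2.2.1, A1.2.1, A1.1.2.1, A.1.2.2, A2.2.1, A2.1.2.1, f]

/-- the block `h` is the block `A = and(A1,A2)`,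
with word `a1 e z1 a2 c1 z2 d y c2 x b f`. -/
def IsAndBlock (n l : ℕ) (I : TDT α n) (s : ℕ → ℕ) (h : ℕ) (A1 A2 A : Var α)
    (d e f : α) : Prop :=
  (d, e, f) ∈ I.T ∧
  BlockWord n l I s h
    [A1.1.1, e, A1.2.2.2, A2.1.1, A1.1.2.2, A2.2.2.2, d, A.2.2.1, A2.1.2.2, A.2.1, A.1.2.1, f]

/-- the block `h` is the block `A = or(A1,A2)`,
with word `a1 b' z1 a2 d y a' x b f z2 c1 e c' c2`. -/
def IsOrBlock (n l : ℕ) (I : TDT α n) (s : ℕ → ℕ) (h : ℕ) (A1 A2 A : Var α)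
    (a' b' c' d e f : α) : Prop :=
  (a', b', c') ∈ I.T ∧ (d, e, f) ∈ I.T ∧
  BlockWord n l I s h
    [A1.1.1, b', A1.2.2.2, A2.1.1, d, A.2.2.1, a', A.2.1, A.1.2.1, f, A2.2.2.2, A1.1.2.2, e,
      c', A2.1.2.2]

/-- the block `h` is the block `[A1,A2] = var(A)`,
with word `d1 y1 a d2 y2 e1 a' e2 x1 b1 f1 c' z b' c x2 b2 f2`. -/
def IsVarBlock (n l : ℕ) (I : TDT α n) (s : ℕ → ℕ) (h : ℕ) (A A1 A2 : Var α)
    (d1 e1 f1 d2 e2 f2 a' b' c' : α) : Prop :=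
  (d1, e1, f1) ∈ I.T ∧ (d2, e2, f2) ∈ I.T ∧ (a', b', c') ∈ I.T ∧
  BlockWord n l I s h
    [d1, A1.2.2.1, A.1.1, d2, A2.2.2.1, e1, a', e2, A1.2.1, A1.1.2.1, f1, c', A.2.2.2, b',
      A.1.2.2, A2.2.1, A2.1.2.1, f2]

/-- `(I,s)` is an *assembling of basic blocks* over the set `𝒜` of variables:
the word representation of `I` is a concatenation of `l` blocks, each of one
of the four kinds `copy`, `and`, `or`, `var`; each variable is the input of
exactly one block and the output of exactly one other block, and `T`
consists of the internal triples of the blocks together with the triples of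
the variables. -/
def IsAssembling (n l : ℕ) (I : TDT α n) (s : ℕ → ℕ) (𝒜 : Finset (Var α)) : Prop :=
  IsBlockDec n l s ∧
  (∀ V ∈ 𝒜, V.1 ∈ I.T ∧ V.2 ∈ I.T ∧ V.1 ≠ V.2) ∧
  (∀ V ∈ 𝒜, ∀ W ∈ 𝒜, V ≠ W → V.1 ≠ W.1 ∧ V.1 ≠ W.2 ∧ V.2 ≠ W.1 ∧ V.2 ≠ W.2) ∧
  (∀ V ∈ 𝒜, ∃ h0 h1, VarBlocksAt n l I s h0 h1 V.1.1 V.1.2.1 V.1.2.2 V.2.1 V.2.2.1 V.2.2.2) ∧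
  (∀ t ∈ I.T, InternalT n l I s t ∨ ∃ V ∈ 𝒜, t = V.1 ∨ t = V.2) ∧
  ∀ h, 1 ≤ h → h ≤ l →
    (∃ A ∈ 𝒜, ∃ A1 ∈ 𝒜, ∃ A2 ∈ 𝒜, ∃ d e f : α, IsCopyBlock n l I s h A A1 A2 d e f) ∨
    (∃ A ∈ 𝒜, ∃ A1 ∈ 𝒜, ∃ A2 ∈ 𝒜, ∃ d e f : α, IsAndBlock n l I s h A1 A2 A d e f) ∨
    (∃ A ∈ 𝒜, ∃ A1 ∈ 𝒜, ∃ A2 ∈ 𝒜, ∃ a' b' c' d e f : α,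
      IsOrBlock n l I s h A1 A2 A a' b' c' d e f) ∨
    (∃ A ∈ 𝒜, ∃ A1 ∈ 𝒜, ∃ A2 ∈ 𝒜, ∃ d1 e1 f1 d2 e2 f2 a' b' c' : α,
      IsVarBlock n l I s h A A1 A2 d1 e1 f1 d2 e2 f2 a' b' c')

end Main

/-- satisfiability of a boolean formula in CNF (clauses are lists of
literals; a literal is a pair (variable index, sign)) -/
def CNFSat (m : ℕ) (φ : List (List (Fin m × Bool))) : Prop :=
  ∃ v : Fin m → Bool, ∀ C ∈ φ, ∃ p ∈ C, v p.1 = p.2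

/-- Property 1 of the paper.
Let `0 < i < j < k ≤ n`, `τ = τ_{i,j,k}`, `q = k+i-j`. For all
`u < v` in `{0,…,n}`:
`τ(u) > τ(v) ↔ i ≤ u < q ≤ v < k` and
`τ⁻¹(u) > τ⁻¹(v) ↔ i ≤ u < j ≤ v < k`. -/
theorem stmt0 (n i j k : ℕ) (hn : 0 < n) (hi : 0 < i) (hij : i < j) (hjk : j < k)
    (hkn : k ≤ n) (u v : ℕ) (hu : u ≤ n) (hv : v ≤ n) (huv : u < v) :
    (tau i j k v < tau i j k u ↔
      (i ≤ u ∧ u < k + i - j) ∧ (k + i - j ≤ v ∧ v < k)) ∧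
    (tauInv i j k v < tauInv i j k u ↔
      (i ≤ u ∧ u < j) ∧ (j ≤ v ∧ v < k)) := by
  constructor <;> · simp only [tauInv, tau]; split_ifs <;> omega
end

section
/- Let π be a permutation of {0,…,n} and τ = τ_{i,j,k} a transposition with 0 < i < j < k ≤ n. Then for all x ∈ {1,…,n}∖{i,j,k}, the pair (x−1,x) is an adjacency of π if and only if (τ^{−1}(x)−1, τ^{−1}(x)) is an adjacency of π∘τ. Consequently d_b(π∘τ) ≥ d_b(π) − 3. -/
/- ----------------------------------------------------------------------
  Common definitions for the formalization of
  "Sorting by Transpositions is Difficult" (Bulteau, Fertin, Rusu).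

  Permutations of {0,…,n} are represented as functions ℕ → ℕ that are
  bijections of the set {0,…,n} (everything above n is irrelevant /
  fixed).
---------------------------------------------------------------------- -/

set_option autoImplicit false

lemma tau_tauInv_aux (i j k x : ℕ) (hi : 0 < i) (hij : i < j) (hjk : j < k) :
    tau i j k (tauInv i j k x) = x := by
  simp only [tau, tauInv]
  split_ifs <;> omega

lemma tau_tauInv_sub_aux (i j k x : ℕ) (hi : 0 < i) (hij : i < j) (hjk : j < k)
    (hx : 1 ≤ x) (hxi : x ≠ i) (hxj : x ≠ j) (hxk : x ≠ k) :
    tau i j k (tauInv i j k x - 1) = x - 1 := by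
  simp only [tau, tauInv]
  split_ifs <;> omega

lemma tauInv_mem_aux (n i j k x : ℕ) (hi : 0 < i) (hij : i < j) (hjk : j < k) (hkn : k ≤ n)
    (hx : 1 ≤ x) (hxn : x ≤ n) : 1 ≤ tauInv i j k x ∧ tauInv i j k x ≤ n := by
  simp only [tau, tauInv]
  split_ifs <;> omega

/-- stmt2 -/
theorem stmt2 (n i j k : ℕ) (π : ℕ → ℕ)
    (hbij : Set.BijOn π (Set.Icc 0 n) (Set.Icc 0 n))
    (hi : 0 < i) (hij : i < j) (hjk : j < k) (hkn : k ≤ n) :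
    (∀ x, 1 ≤ x → x ≤ n → x ≠ i → x ≠ j → x ≠ k →
      (π x = π (x - 1) + 1 ↔
       π (tau i j k (tauInv i j k x)) = π (tau i j k (tauInv i j k x - 1)) + 1)) ∧
    db n π ≤ db n (fun v => π (tau i j k v)) + 3 := by
  have key : ∀ x, tau i j k (tauInv i j k x) = x :=
    fun x => tau_tauInv_aux i j k x hi hij hjk
  have key2 : ∀ x, 1 ≤ x → x ≠ i → x ≠ j → x ≠ k →
      tau i j k (tauInv i j k x - 1) = x - 1 :=
    fun x h1 h2 h3 h4 => tau_tauInv_sub_aux i j k x hi hij hjk h1 h2 h3 h4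
  constructor
  · intro x h1 h2 h3 h4 h5
    rw [key x, key2 x h1 h3 h4 h5]
  · unfold db
    set S := (Finset.Icc 1 n).filter fun x => π x ≠ π (x - 1) + 1 with hS
    set S' := S \ ({i, j, k} : Finset ℕ) with hS'
    have h1 : S.card ≤ S'.card + 3 := by
      have hsub : S ⊆ S' ∪ ({i, j, k} : Finset ℕ) := by
        intro x hx
        by_cases h : x ∈ ({i, j, k} : Finset ℕ)
        · exact Finset.mem_union_right _ h
        · exact Finset.mem_union_left _ (Finset.mem_sdiff.mpr ⟨hx, h⟩)
      calc S.card ≤ (S' ∪ ({i, j, k} : Finset ℕ)).card := Finset.card_le_card hsub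
        _ ≤ S'.card + ({i, j, k} : Finset ℕ).card := Finset.card_union_le _ _
        _ ≤ S'.card + 3 := by
            have : ({i, j, k} : Finset ℕ).card ≤ 3 := by
              refine le_trans (Finset.card_insert_le _ _) ?_
              have := Finset.card_insert_le j ({k} : Finset ℕ)
              simp only [Finset.card_singleton] at this
              omega
            omega
    have h2 : S'.card ≤ ((Finset.Icc 1 n).filter fun x =>
        (fun v => π (tau i j k v)) x ≠ (fun v => π (tau i j k v)) (x - 1) + 1).card := by
      apply Finset.card_le_card_of_injOn (fun x => tauInv i j k x)
      · intro x hx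
        rw [hS', Finset.mem_coe, Finset.mem_sdiff] at hx
        obtain ⟨hxS, hxn⟩ := hx
        rw [hS, Finset.mem_filter, Finset.mem_Icc] at hxS
        simp only [Finset.mem_insert, Finset.mem_singleton, not_or] at hxn
        obtain ⟨⟨hx1, hx2⟩, hbp⟩ := hxS
        obtain ⟨hni, hnj, hnk⟩ := hxn
        obtain ⟨ha, hb⟩ := tauInv_mem_aux n i j k x hi hij hjk hkn hx1 hx2
        rw [Finset.mem_coe, Finset.mem_filter, Finset.mem_Icc]
        refine ⟨⟨ha, hb⟩, ?_⟩
        simp only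
        rw [key x, key2 x hx1 hni hnj hnk]
        exact hbp
      · intro a _ b _ hab
        have := congrArg (tau i j k) hab
        rwa [key a, key b] at this
    omega
end

section
/- Let I = ⟨Σ,T,ψ⟩ be a 3DT-instance of span n with domain L, and let π be a permutation of {0,…,n} such that I ∼ π. Then the number of breakpoints of π equals |L| = 3|T|. -/
/- ----------------------------------------------------------------------
  Common definitions for the formalization of
  "Sorting by Transpositions is Difficult" (Bulteau, Fertin, Rusu).

  Permutations of {0,…,n} are represented as functions ℕ → ℕ that are
  bijections of the set {0,…,n} (everything above n is irrelevant /
  fixed).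
---------------------------------------------------------------------- -/

set_option autoImplicit false

/-- Property 8 of the paper.
If `I = ⟨Σ,T,ψ⟩` is a 3DT-instance of span `n` with domain `L` and `π` is a
permutation of `{0,…,n}` with `I ∼ π`, then `d_b(π) = |L| = 3|T|`. -/
theorem stmt4 {α : Type*} [DecidableEq α] {n : ℕ} (I : TDT α n) (π : ℕ → ℕ)
    (hbij : Set.BijOn π (Set.Icc 0 n) (Set.Icc 0 n))
    (heq : EquivPerm I π) :
    db n π = I.dom.card ∧ I.dom.card = 3 * I.T.card := by
  obtain ⟨h0, hnb, htr⟩ := heq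
  have hdomIcc : ∀ v ∈ I.dom, v ∈ Finset.Icc 1 n := by
    intro v hv
    obtain ⟨σ, hσ, rfl⟩ := Finset.mem_image.mp hv
    exact I.psi_mem σ hσ
  -- key: every element of the domain is a breakpoint
  have hbp : ∀ v ∈ I.dom, π v ≠ π (v - 1) + 1 := by
    intro v hv hadj
    obtain ⟨σ, hσ, rfl⟩ := Finset.mem_image.mp hv
    obtain ⟨t, htT, hσt⟩ := I.cover σ hσ
    obtain ⟨ha, hb, hc⟩ := I.mem_T t htT
    obtain ⟨hab, hac, hbc⟩ := I.nodup_T t htT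
    obtain ⟨h1, h2, h3⟩ := htr t htT
    -- pick predecessor
    have hex : ∃ ρ, ρ ∈ I.Sig ∧ ρ ≠ σ ∧ π (I.psi σ) = π (I.psi ρ - 1) + 1 := by
      simp only [trElems, Finset.mem_insert, Finset.mem_singleton] at hσt
      rcases hσt with rfl | rfl | rfl
      · exact ⟨t.2.2, hc, Ne.symm hac, h3⟩
      · exact ⟨t.1, ha, hab, h1⟩
      · exact ⟨t.2.1, hb, hbc, h2⟩
    obtain ⟨ρ, hρ, hρσ, hπ⟩ := hex
    have hψne : I.psi ρ ≠ I.psi σ := fun h => hρσ (I.psi_inj hρ hσ h)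
    have hσIcc := Finset.mem_Icc.mp (I.psi_mem σ hσ)
    have hρIcc := Finset.mem_Icc.mp (I.psi_mem ρ hρ)
    have heqπ : π (I.psi σ - 1) = π (I.psi ρ - 1) := by
      have := hadj.symm.trans hπ; omega
    have h1mem : I.psi σ - 1 ∈ Set.Icc 0 n := by
      simp only [Set.mem_Icc]; omega
    have h2mem : I.psi ρ - 1 ∈ Set.Icc 0 n := by
      simp only [Set.mem_Icc]; omega
    have := hbij.injOn h1mem h2mem heqπ
    omega
  have hdb : db n π = I.dom.card := by
    unfold db
    congr 1
    apply Finset.ext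
    intro v
    simp only [Finset.mem_filter, Finset.mem_Icc]
    constructor
    · rintro ⟨⟨hv1, hv2⟩, hne⟩
      by_contra hvd
      exact hne (hnb v hv1 hv2 hvd)
    · intro hv
      exact ⟨Finset.mem_Icc.mp (hdomIcc v hv), hbp v hv⟩
  refine ⟨hdb, ?_⟩
  have hcarddom : I.dom.card = I.Sig.card := Finset.card_image_of_injOn I.psi_inj
  have hSig : I.Sig = I.T.biUnion trElems := by
    apply Finset.ext
    intro σ
    simp only [Finset.mem_biUnion]
    constructor
    · exact I.cover σ
    · rintro ⟨t, htT, hσt⟩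
      obtain ⟨ha, hb, hc⟩ := I.mem_T t htT
      simp only [trElems, Finset.mem_insert, Finset.mem_singleton] at hσt
      rcases hσt with rfl | rfl | rfl <;> assumption
  have hcard3 : ∀ t ∈ I.T, (trElems t).card = 3 := by
    intro t htT
    obtain ⟨hab, hac, hbc⟩ := I.nodup_T t htT
    simp only [trElems]
    rw [Finset.card_insert_of_notMem (by simp [hab, hac]),
      Finset.card_insert_of_notMem (by simp [hbc]), Finset.card_singleton]
  rw [hcarddom, hSig, Finset.card_biUnion I.disj_T,
    Finset.sum_congr rfl hcard3, Finset.sum_const, smul_eq_mul, mul_comm]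
end

section
/- Let I = ⟨Σ,T,ψ⟩ be a 3DT-instance of span n and π a permutation of {0,…,n} with I ∼ π. If there is a 3DT-step I →(a,b,c) I′ (for some well-ordered triple (a,b,c) ∈ T), then I′ ∼ π∘τ, where τ = τ[a,b,c,ψ]. -/
/- ----------------------------------------------------------------------
  Common definitions for the formalization of
  "Sorting by Transpositions is Difficult" (Bulteau, Fertin, Rusu).

  Permutations of {0,…,n} are represented as functions ℕ → ℕ that are
  bijections of the set {0,…,n} (everything above n is irrelevant /
  fixed).
---------------------------------------------------------------------- -/

set_option autoImplicit false

set_option maxHeartbeats 1000000 in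
private lemma tauInv_tau_eq {i j k : ℕ} (hi : 0 < i) (hij : i < j) (hjk : j < k) (x : ℕ) :
    tauInv i j k (tau i j k x) = x := by
  unfold tauInv tau; split_ifs <;> omega

set_option maxHeartbeats 1000000 in
private lemma tau_tauInv_eq {i j k : ℕ} (hi : 0 < i) (hij : i < j) (hjk : j < k) (x : ℕ) :
    tau i j k (tauInv i j k x) = x := by
  unfold tauInv tau; split_ifs <;> omega

set_option maxHeartbeats 1000000 in
private lemma tau_tauInv_pred {i j k x : ℕ} (hi : 0 < i) (hij : i < j) (hjk : j < k)
    (hx1 : x ≠ i) (hx2 : x ≠ j) (hx3 : x ≠ k) :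
    tau i j k (tauInv i j k x - 1) = x - 1 := by
  unfold tauInv tau; split_ifs <;> omega

set_option maxHeartbeats 1000000 in
lemma stmt5_aux {α : Type*} [DecidableEq α] {n : ℕ} (I I' : TDT α n)
    (t : α × α × α) (π : ℕ → ℕ) (i j k : ℕ)
    (hi : 0 < i) (hij : i < j) (hjk : j < k) (hkn : k ≤ n)
    (hperm : (I.psi t.1 = i ∧ I.psi t.2.1 = j ∧ I.psi t.2.2 = k) ∨
             (I.psi t.2.1 = i ∧ I.psi t.2.2 = j ∧ I.psi t.1 = k) ∨
             (I.psi t.2.2 = i ∧ I.psi t.1 = j ∧ I.psi t.2.1 = k))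
    (htauInv : ∀ x, I.tauOfInv t x = tauInv i j k x)
    (heq : EquivPerm I π) (hstep : StepT t I I') :
    EquivPerm I' (fun v => π (tau i j k v)) := by
  obtain ⟨ht, hwo, hSig, hT, hpsi'⟩ := hstep
  obtain ⟨h0, hnd, htr⟩ := heq
  have ha : t.1 ∈ I.Sig := (I.mem_T t ht).1
  have hb : t.2.1 ∈ I.Sig := (I.mem_T t ht).2.1
  have hc : t.2.2 ∈ I.Sig := (I.mem_T t ht).2.2
  obtain ⟨hb1, hb2, hb3⟩ := htr t ht
  have hpi1 : π j = π (i - 1) + 1 := by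
    rcases hperm with ⟨e1, e2, _⟩ | ⟨e1, e2, _⟩ | ⟨e1, e2, _⟩ <;> rw [← e1, ← e2] <;>
      first | exact hb1 | exact hb2 | exact hb3
  have hpi2 : π k = π (j - 1) + 1 := by
    rcases hperm with ⟨_, e2, e3⟩ | ⟨_, e2, e3⟩ | ⟨_, e2, e3⟩ <;> rw [← e2, ← e3] <;>
      first | exact hb1 | exact hb2 | exact hb3
  have hpi3 : π i = π (k - 1) + 1 := by
    rcases hperm with ⟨e1, _, e3⟩ | ⟨e1, _, e3⟩ | ⟨e1, _, e3⟩ <;> rw [← e3, ← e1] <;>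
      first | exact hb1 | exact hb2 | exact hb3
  have hmem : ∀ σ ∈ I.Sig, (I.psi σ = i ∨ I.psi σ = j ∨ I.psi σ = k) →
      σ = t.1 ∨ σ = t.2.1 ∨ σ = t.2.2 := by
    intro σ hσ hval
    rcases hperm with ⟨e1, e2, e3⟩ | ⟨e1, e2, e3⟩ | ⟨e1, e2, e3⟩ <;>
      rcases hval with h | h | h <;>
      first
        | exact Or.inl (I.psi_inj (Finset.mem_coe.mpr hσ) (Finset.mem_coe.mpr ha) (by omega))
        | exact Or.inr (Or.inl
            (I.psi_inj (Finset.mem_coe.mpr hσ) (Finset.mem_coe.mpr hb) (by omega)))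
        | exact Or.inr (Or.inr
            (I.psi_inj (Finset.mem_coe.mpr hσ) (Finset.mem_coe.mpr hc) (by omega)))
  have hmemSig' : ∀ σ ∈ I'.Sig,
      σ ∈ I.Sig ∧ I.psi σ ≠ i ∧ I.psi σ ≠ j ∧ I.psi σ ≠ k := by
    intro σ hσ
    rw [hSig, Finset.mem_sdiff] at hσ
    obtain ⟨hσS, hσt⟩ := hσ
    simp only [trElems, Finset.mem_insert, Finset.mem_singleton] at hσt
    push_neg at hσt
    have key : ¬(I.psi σ = i ∨ I.psi σ = j ∨ I.psi σ = k) := by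
      intro h
      rcases hmem σ hσS h with h' | h' | h'
      · exact hσt.1 h'
      · exact hσt.2.1 h'
      · exact hσt.2.2 h'
    exact ⟨hσS, by tauto, by tauto, by tauto⟩
  refine ⟨?_, ?_, ?_⟩
  · show π (tau i j k 0) = 0
    have e0 : tau i j k 0 = 0 := by unfold tau; split_ifs <;> omega
    rw [e0]; exact h0
  · intro v hv1 hvn hvdom
    show π (tau i j k v) = π (tau i j k (v - 1)) + 1
    by_cases hvi : v = i
    · have e1 : tau i j k i = j := by unfold tau; split_ifs <;> omega
      have e2 : tau i j k (i - 1) = i - 1 := by unfold tau; split_ifs <;> omega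
      rw [hvi, e1, e2]; exact hpi1
    by_cases hvq : v = k + i - j
    · have e1 : tau i j k (k + i - j) = i := by unfold tau; split_ifs <;> omega
      have e2 : tau i j k (k + i - j - 1) = k - 1 := by unfold tau; split_ifs <;> omega
      rw [hvq, e1, e2]; exact hpi3
    by_cases hvk : v = k
    · have e1 : tau i j k k = k := by unfold tau; split_ifs <;> omega
      have e2 : tau i j k (k - 1) = j - 1 := by unfold tau; split_ifs <;> omega
      rw [hvk, e1, e2]; exact hpi2
    · have hpred : tau i j k (v - 1) = tau i j k v - 1 := by
        unfold tau; split_ifs <;> omega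
      have hrange : 1 ≤ tau i j k v ∧ tau i j k v ≤ n := by
        unfold tau; split_ifs <;> omega
      have hdomu : tau i j k v ∉ I.dom := by
        intro hd
        unfold TDT.dom at hd
        obtain ⟨σ, hσ, hψ⟩ := Finset.mem_image.mp hd
        by_cases hval : I.psi σ = i ∨ I.psi σ = j ∨ I.psi σ = k
        · have hinv : tauInv i j k (tau i j k v) = v := tauInv_tau_eq hi hij hjk v
          rcases hval with h | h | h
          · apply hvq
            have e : tau i j k v = i := by omega
            rw [e] at hinv
            have e' : tauInv i j k i = k + i - j := by
              unfold tauInv tau; split_ifs <;> omega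
            omega
          · apply hvi
            have e : tau i j k v = j := by omega
            rw [e] at hinv
            have e' : tauInv i j k j = i := by
              unfold tauInv tau; split_ifs <;> omega
            omega
          · apply hvk
            have e : tau i j k v = k := by omega
            rw [e] at hinv
            have e' : tauInv i j k k = k := by
              unfold tauInv tau; split_ifs <;> omega
            omega
        · push_neg at hval
          have hσ' : σ ∈ I'.Sig := by
            rw [hSig, Finset.mem_sdiff]
            refine ⟨hσ, ?_⟩
            simp only [trElems, Finset.mem_insert, Finset.mem_singleton]
            push_neg
            refine ⟨?_, ?_, ?_⟩ <;> rintro rfl <;>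
              rcases hperm with ⟨e1, e2, e3⟩ | ⟨e1, e2, e3⟩ | ⟨e1, e2, e3⟩ <;> omega
          apply hvdom
          have hv' : I'.psi σ = v := by
            rw [hpsi' σ hσ', htauInv, hψ]
            exact tauInv_tau_eq hi hij hjk v
          show v ∈ I'.Sig.image I'.psi
          exact Finset.mem_image.mpr ⟨σ, hσ', hv'⟩
      rw [hpred]
      exact hnd _ hrange.1 hrange.2 hdomu
  · intro t' ht'
    have ht'T : t' ∈ I.T := by rw [hT] at ht'; exact Finset.mem_of_mem_erase ht'
    have ha' : t'.1 ∈ I'.Sig := (I'.mem_T t' ht').1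
    have hb' : t'.2.1 ∈ I'.Sig := (I'.mem_T t' ht').2.1
    have hc' : t'.2.2 ∈ I'.Sig := (I'.mem_T t' ht').2.2
    have key : ∀ σ ∈ I'.Sig,
        tau i j k (I'.psi σ) = I.psi σ ∧ tau i j k (I'.psi σ - 1) = I.psi σ - 1 := by
      intro σ hσ
      obtain ⟨hσS, hne_i, hne_j, hne_k⟩ := hmemSig' σ hσ
      have hψ' : I'.psi σ = tauInv i j k (I.psi σ) := (hpsi' σ hσ).trans (htauInv _)
      constructor
      · rw [hψ']; exact tau_tauInv_eq hi hij hjk _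
      · rw [hψ']; exact tau_tauInv_pred hi hij hjk hne_i hne_j hne_k
    obtain ⟨g1, g2, g3⟩ := htr t' ht'T
    refine ⟨?_, ?_, ?_⟩
    · show π (tau i j k (I'.psi t'.2.1)) = π (tau i j k (I'.psi t'.1 - 1)) + 1
      rw [(key _ hb').1, (key _ ha').2]; exact g1
    · show π (tau i j k (I'.psi t'.2.2)) = π (tau i j k (I'.psi t'.2.1 - 1)) + 1
      rw [(key _ hc').1, (key _ hb').2]; exact g2
    · show π (tau i j k (I'.psi t'.1)) = π (tau i j k (I'.psi t'.2.2 - 1)) + 1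
      rw [(key _ ha').1, (key _ hc').2]; exact g3

/-- Lemma 1 of the paper.
If `I ∼ π` and there is a 3DT-step `I →(a,b,c) I'`, then
`I' ∼ π ∘ τ` where `τ = τ[a,b,c,ψ]`. -/
theorem stmt5 {α : Type*} [DecidableEq α] {n : ℕ} (I I' : TDT α n)
    (t : α × α × α) (π : ℕ → ℕ)
    (hbij : Set.BijOn π (Set.Icc 0 n) (Set.Icc 0 n))
    (heq : EquivPerm I π)
    (hstep : StepT t I I') :
    EquivPerm I' (fun v => π (I.tauOf t v)) := by
  have ht := hstep.1
  have hwo := hstep.2.1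
  have ha : t.1 ∈ I.Sig := (I.mem_T t ht).1
  have hb : t.2.1 ∈ I.Sig := (I.mem_T t ht).2.1
  have hc : t.2.2 ∈ I.Sig := (I.mem_T t ht).2.2
  have hpa := Finset.mem_Icc.mp (I.psi_mem _ ha)
  have hpb := Finset.mem_Icc.mp (I.psi_mem _ hb)
  have hpc := Finset.mem_Icc.mp (I.psi_mem _ hc)
  unfold TDT.WellOrderedT WellOrdered3 at hwo
  set p := I.psi t.1 with hp
  set q := I.psi t.2.1 with hq
  set r := I.psi t.2.2 with hr
  have hperm : (p = min3 p q r ∧ q = mid3 p q r ∧ r = max3 p q r) ∨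
      (q = min3 p q r ∧ r = mid3 p q r ∧ p = max3 p q r) ∨
      (r = min3 p q r ∧ p = mid3 p q r ∧ q = max3 p q r) := by
    unfold mid3 min3 max3; omega
  have hi : 0 < min3 p q r := by unfold min3; omega
  have hij : min3 p q r < mid3 p q r := by unfold mid3 min3 max3; omega
  have hjk : mid3 p q r < max3 p q r := by unfold mid3 min3 max3; omega
  have hkn : max3 p q r ≤ n := by unfold max3; omega
  exact stmt5_aux I I' t π (min3 p q r) (mid3 p q r) (max3 p q r)
    hi hij hjk hkn hperm (fun _ => rfl) heq hstep
end

section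
/- Let I = ⟨Σ,T,ψ⟩ be a 3DT-instance of span n and π a permutation of {0,…,n} with I ∼ π. If there exists a transposition τ = τ_{i,j,k} such that d_b(π∘τ) = d_b(π) − 3, then T contains a well-ordered triple (a,b,c) such that τ = τ[a,b,c,ψ]. -/
/- ----------------------------------------------------------------------
  Common definitions for the formalization of
  "Sorting by Transpositions is Difficult" (Bulteau, Fertin, Rusu).

  Permutations of {0,…,n} are represented as functions ℕ → ℕ that are
  bijections of the set {0,…,n} (everything above n is irrelevant /
  fixed).
---------------------------------------------------------------------- -/

set_option autoImplicit false

section Stmt6Aux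

variable {i j k n : ℕ}

lemma tau_tauInv (h1 : 0 < i) (h2 : i < j) (h3 : j < k) (y : ℕ) :
    tau i j k (tauInv i j k y) = y := by
  simp only [tau, tauInv]; split_ifs <;> omega

lemma tauInv_inj (h1 : 0 < i) (h2 : i < j) (h3 : j < k) :
    Function.Injective (tauInv i j k) :=
  Function.LeftInverse.injective (g := tau i j k) (tau_tauInv h1 h2 h3)

lemma tauInv_le (h1 : 0 < i) (h2 : i < j) (h3 : j < k) (hk : k ≤ n) {y : ℕ} (hy : y ≤ n) :
    tauInv i j k y ≤ n := by
  simp only [tau, tauInv]; split_ifs <;> omega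

lemma tau_pred (h1 : 0 < i) (h2 : i < j) (h3 : j < k) {x : ℕ} (hx : 1 ≤ x)
    (hxi : x ≠ i) (hxq : x ≠ k + i - j) (hxk : x ≠ k) :
    tau i j k (x - 1) = tau i j k x - 1 := by
  simp only [tau]; split_ifs <;> omega

lemma tau_spec (h1 : 0 < i) (h2 : i < j) (h3 : j < k) :
    tau i j k i = j ∧ tau i j k (k + i - j) = i ∧ tau i j k k = k ∧
    tau i j k (i - 1) = i - 1 ∧ tau i j k (k + i - j - 1) = k - 1 ∧
    tau i j k (k - 1) = j - 1 := by
  refine ⟨?_, ?_, ?_, ?_, ?_, ?_⟩ <;> (simp only [tau]; split_ifs <;> omega)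

lemma tauInv_spec (h1 : 0 < i) (h2 : i < j) (h3 : j < k) :
    tauInv i j k i = k + i - j ∧ tauInv i j k j = i ∧ tauInv i j k k = k := by
  refine ⟨?_, ?_, ?_⟩ <;> (simp only [tau, tauInv]; split_ifs <;> omega)

end Stmt6Aux

lemma mem_Sig_of_trElems {α : Type*} [DecidableEq α] {n : ℕ} (I : TDT α n)
    {t : α × α × α} (ht : t ∈ I.T) {σ : α} (hσ : σ ∈ trElems t) : σ ∈ I.Sig := by
  have h := I.mem_T t ht
  simp only [trElems, Finset.mem_insert, Finset.mem_singleton] at hσ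
  rcases hσ with rfl | rfl | rfl
  · exact h.1
  · exact h.2.1
  · exact h.2.2

/-- Lemma 2 of the paper.
Let `I = ⟨Σ,T,ψ⟩` be a 3DT-instance of span `n`, `π` a permutation of
`{0,…,n}` with `I ∼ π`. If a transposition `τ = τ_{i,j,k}` satisfies
`d_b(π∘τ) = d_b(π) - 3`, then `T` contains a well-ordered triple `(a,b,c)`
with `τ = τ[a,b,c,ψ]` (i.e. `(i,j,k)` is the sorted triple of `ψ`-values). -/
theorem stmt6 {α : Type*} [DecidableEq α] {n : ℕ} (I : TDT α n) (π : ℕ → ℕ)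
    (hbij : Set.BijOn π (Set.Icc 0 n) (Set.Icc 0 n))
    (heq : EquivPerm I π)
    (i j k : ℕ) (hi : 0 < i) (hij : i < j) (hjk : j < k) (hkn : k ≤ n)
    (hdb : db n (fun v => π (tau i j k v)) + 3 = db n π) :
    ∃ t ∈ I.T, I.WellOrderedT t ∧
      min3 (I.psi t.1) (I.psi t.2.1) (I.psi t.2.2) = i ∧
      mid3 (I.psi t.1) (I.psi t.2.1) (I.psi t.2.2) = j ∧
      max3 (I.psi t.1) (I.psi t.2.1) (I.psi t.2.2) = k := by
  obtain ⟨hpi0, hnd, htr⟩ := heq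
  have hinj : ∀ x, x ≤ n → ∀ y, y ≤ n → π x = π y → x = y := fun x hx y hy hxy =>
    hbij.injOn ⟨Nat.zero_le _, hx⟩ ⟨Nat.zero_le _, hy⟩ hxy
  obtain ⟨hti, htq, htk, hti', htq', htk'⟩ := tau_spec hi hij hjk
  obtain ⟨hvi, hvj, hvk⟩ := tauInv_spec hi hij hjk
  have finj := tauInv_inj hi hij hjk
  set B1 := (Finset.Icc 1 n).filter (fun x => π x ≠ π (x - 1) + 1) with hB1
  set B2 := (Finset.Icc 1 n).filter
      (fun x => π (tau i j k x) ≠ π (tau i j k (x - 1)) + 1) with hB2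
  have hdb' : B2.card + 3 = B1.card := hdb
  have hsub : (B1 \ {i, j, k}).image (tauInv i j k) ⊆ B2 := by
    intro x hx
    simp only [Finset.mem_image, Finset.mem_sdiff, Finset.mem_insert, Finset.mem_singleton,
      hB1, hB2, Finset.mem_filter, Finset.mem_Icc] at hx ⊢
    obtain ⟨y, ⟨⟨⟨hy1, hyn⟩, hbp⟩, hyijk⟩, rfl⟩ := hx
    push_neg at hyijk
    have hxy : tau i j k (tauInv i j k y) = y := tau_tauInv hi hij hjk y
    have hx1 : 1 ≤ tauInv i j k y := by
      rcases Nat.eq_zero_or_pos (tauInv i j k y) with h0 | h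
      · exfalso
        rw [h0] at hxy
        have : tau i j k 0 = 0 := by simp only [tau]; split_ifs <;> omega
        omega
      · exact h
    refine ⟨⟨hx1, tauInv_le hi hij hjk hkn hyn⟩, ?_⟩
    have hnei : tauInv i j k y ≠ i := fun h => hyijk.2.1 (by rw [← hxy, h, hti])
    have hneq : tauInv i j k y ≠ k + i - j := fun h => hyijk.1 (by rw [← hxy, h, htq])
    have hnek : tauInv i j k y ≠ k := fun h => hyijk.2.2 (by rw [← hxy, h, htk])
    rw [tau_pred hi hij hjk hx1 hnei hneq hnek, hxy]
    exact hbp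
  have hcard : B2 = (B1 \ {i, j, k}).image (tauInv i j k) := by
    refine (Finset.eq_of_subset_of_card_le hsub ?_).symm
    rw [Finset.card_image_of_injective _ finj]
    have hc3 : ({i, j, k} : Finset ℕ).card ≤ 3 := by
      refine le_trans (Finset.card_insert_le _ _) ?_
      refine Nat.succ_le_succ (le_trans (Finset.card_insert_le _ _) ?_)
      simp
    have := Finset.le_card_sdiff ({i, j, k} : Finset ℕ) B1
    omega
  have hnotB2 : ∀ w z : ℕ, tauInv i j k w = z → w ∈ ({i, j, k} : Finset ℕ) → z ∉ B2 := by
    intro w z hwz hw hz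
    rw [hcard] at hz
    obtain ⟨y, hy, hty⟩ := Finset.mem_image.mp hz
    have : y = w := finj (by rw [hty, hwz])
    subst this
    exact (Finset.mem_sdiff.mp hy).2 hw
  have hget : ∀ z, 1 ≤ z → z ≤ n → z ∉ B2 → π (tau i j k z) = π (tau i j k (z - 1)) + 1 := by
    intro z h1 h2 hz
    by_contra h
    exact hz (Finset.mem_filter.mpr ⟨Finset.mem_Icc.mpr ⟨h1, h2⟩, h⟩)
  have E1 : π j = π (i - 1) + 1 := by
    have := hget i hi (by omega) (hnotB2 j i hvj (by simp))
    rwa [hti, hti'] at this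
  have E2 : π i = π (k - 1) + 1 := by
    have := hget (k + i - j) (by omega) (by omega) (hnotB2 i (k + i - j) hvi (by simp))
    rwa [htq, htq'] at this
  have E3 : π k = π (j - 1) + 1 := by
    have := hget k (by omega) hkn (hnotB2 k k hvk (by simp))
    rwa [htk, htk'] at this
  -- j and i are in the domain
  have hjdom : j ∈ I.dom := by
    by_contra h
    have h1 := hnd j (by omega) (by omega) h
    have h2 : π (j - 1) = π (i - 1) := by omega
    have := hinj (j - 1) (by omega) (i - 1) (by omega) h2
    omega
  have hidom : i ∈ I.dom := by
    by_contra h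
    have h1 := hnd i (by omega) (by omega) h
    have h2 : π (i - 1) = π (k - 1) := by omega
    have := hinj (i - 1) (by omega) (k - 1) (by omega) h2
    omega
  have psi_bound : ∀ σ ∈ I.Sig, 1 ≤ I.psi σ ∧ I.psi σ ≤ n := by
    intro σ hσ
    exact Finset.mem_Icc.mp (I.psi_mem σ hσ)
  -- analysis at position j : a triple containing j whose predecessor position is i
  obtain ⟨σj, hσjS, hσj⟩ := Finset.mem_image.mp hjdom
  obtain ⟨t, ht, hσjt⟩ := I.cover σj hσjS
  obtain ⟨e1, e2, e3⟩ := htr t ht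
  have hb1 := psi_bound t.1 (I.mem_T t ht).1
  have hb2 := psi_bound t.2.1 (I.mem_T t ht).2.1
  have hb3 := psi_bound t.2.2 (I.mem_T t ht).2.2
  have Hj : (I.psi t.2.2 = i ∧ I.psi t.1 = j) ∨ (I.psi t.1 = i ∧ I.psi t.2.1 = j) ∨
      (I.psi t.2.1 = i ∧ I.psi t.2.2 = j) := by
    simp only [trElems, Finset.mem_insert, Finset.mem_singleton] at hσjt
    rcases hσjt with rfl | rfl | rfl
    · left
      refine ⟨?_, hσj⟩
      rw [hσj, E1] at e3
      have : π (I.psi t.2.2 - 1) = π (i - 1) := by omega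
      have := hinj _ (by omega) _ (by omega) this
      omega
    · right; left
      refine ⟨?_, hσj⟩
      rw [hσj, E1] at e1
      have : π (I.psi t.1 - 1) = π (i - 1) := by omega
      have := hinj _ (by omega) _ (by omega) this
      omega
    · right; right
      refine ⟨?_, hσj⟩
      rw [hσj, E1] at e2
      have : π (I.psi t.2.1 - 1) = π (i - 1) := by omega
      have := hinj _ (by omega) _ (by omega) this
      omega
  -- analysis at position i : a triple containing i whose predecessor position is k
  obtain ⟨σi, hσiS, hσi⟩ := Finset.mem_image.mp hidom
  obtain ⟨t', ht', hσit⟩ := I.cover σi hσiS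
  obtain ⟨e1', e2', e3'⟩ := htr t' ht'
  have hb1' := psi_bound t'.1 (I.mem_T t' ht').1
  have hb2' := psi_bound t'.2.1 (I.mem_T t' ht').2.1
  have hb3' := psi_bound t'.2.2 (I.mem_T t' ht').2.2
  have Hi : (I.psi t'.2.2 = k ∧ I.psi t'.1 = i) ∨ (I.psi t'.1 = k ∧ I.psi t'.2.1 = i) ∨
      (I.psi t'.2.1 = k ∧ I.psi t'.2.2 = i) := by
    simp only [trElems, Finset.mem_insert, Finset.mem_singleton] at hσit
    rcases hσit with rfl | rfl | rfl
    · left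
      refine ⟨?_, hσi⟩
      rw [hσi, E2] at e3'
      have : π (I.psi t'.2.2 - 1) = π (k - 1) := by omega
      have := hinj _ (by omega) _ (by omega) this
      omega
    · right; left
      refine ⟨?_, hσi⟩
      rw [hσi, E2] at e1'
      have : π (I.psi t'.1 - 1) = π (k - 1) := by omega
      have := hinj _ (by omega) _ (by omega) this
      omega
    · right; right
      refine ⟨?_, hσi⟩
      rw [hσi, E2] at e2'
      have : π (I.psi t'.2.1 - 1) = π (k - 1) := by omega
      have := hinj _ (by omega) _ (by omega) this
      omega
  -- t = t' : both contain a letter at position i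
  have hmem3 : ∀ (u : α × α × α), u.1 ∈ trElems u ∧ u.2.1 ∈ trElems u ∧ u.2.2 ∈ trElems u := by
    intro u
    simp [trElems]
  have htt' : t = t' := by
    obtain ⟨β, hβt, hβi⟩ : ∃ β ∈ trElems t, I.psi β = i := by
      rcases Hj with ⟨h1, _⟩ | ⟨h1, _⟩ | ⟨h1, _⟩
      · exact ⟨t.2.2, (hmem3 t).2.2, h1⟩
      · exact ⟨t.1, (hmem3 t).1, h1⟩
      · exact ⟨t.2.1, (hmem3 t).2.1, h1⟩
    obtain ⟨β', hβt', hβi'⟩ : ∃ β' ∈ trElems t', I.psi β' = i := by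
      rcases Hi with ⟨_, h1⟩ | ⟨_, h1⟩ | ⟨_, h1⟩
      · exact ⟨t'.1, (hmem3 t').1, h1⟩
      · exact ⟨t'.2.1, (hmem3 t').2.1, h1⟩
      · exact ⟨t'.2.2, (hmem3 t').2.2, h1⟩
    have hββ : β = β' := I.psi_inj (Finset.mem_coe.mpr (mem_Sig_of_trElems I ht hβt))
      (Finset.mem_coe.mpr (mem_Sig_of_trElems I ht' hβt')) (by rw [hβi, hβi'])
    by_contra hne
    exact Finset.disjoint_left.mp (I.disj_T t ht t' ht' hne) hβt (hββ ▸ hβt')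
  subst htt'
  -- case analysis: the positions of t are a cyclic rotation of (i,j,k)
  refine ⟨t, ht, ?_⟩
  have Hfin : (I.psi t.1 = i ∧ I.psi t.2.1 = j ∧ I.psi t.2.2 = k) ∨
      (I.psi t.1 = j ∧ I.psi t.2.1 = k ∧ I.psi t.2.2 = i) ∨
      (I.psi t.1 = k ∧ I.psi t.2.1 = i ∧ I.psi t.2.2 = j) := by
    rcases Hj with ⟨h1, h2⟩ | ⟨h1, h2⟩ | ⟨h1, h2⟩ <;>
      rcases Hi with ⟨h3, h4⟩ | ⟨h3, h4⟩ | ⟨h3, h4⟩ <;> omega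
  unfold TDT.WellOrderedT WellOrdered3 min3 mid3 max3
  rcases Hfin with ⟨h1, h2, h3⟩ | ⟨h1, h2, h3⟩ | ⟨h1, h2, h3⟩ <;>
    rw [h1, h2, h3] <;>
    refine ⟨by omega, ?_, ?_, ?_⟩ <;>
    simp only [min3, max3, Nat.min_def, Nat.max_def] <;> (split_ifs <;> omega)
end

section
/- Let I = ⟨Σ,T,ψ⟩ be a 3DT-instance of span n and π a permutation of {0,…,n} with I ∼ π. Then I is 3DT-collapsible if and only if d_t(π) = |T| = d_b(π)/3. -/
/- ----------------------------------------------------------------------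
  Common definitions for the formalization of
  "Sorting by Transpositions is Difficult" (Bulteau, Fertin, Rusu).

  Permutations of {0,…,n} are represented as functions ℕ → ℕ that are
  bijections of the set {0,…,n} (everything above n is irrelevant /
  fixed).
---------------------------------------------------------------------- -/

set_option autoImplicit false

/- ------------------- auxiliary lemmas for stmt7 ------------------- -/

section TauAux

variable {i j k n : ℕ}

lemma tau_invl (h1 : 0 < i) (h2 : i < j) (h3 : j < k) (x : ℕ) :
    tau i (k+i-j) k (tau i j k x) = x := by
  simp only [tau]; split_ifs <;> omega

lemma tau_invr (h1 : 0 < i) (h2 : i < j) (h3 : j < k) (x : ℕ) :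
    tau i j k (tau i (k+i-j) k x) = x := by
  simp only [tau]; split_ifs <;> omega

lemma tau_succ (h1 : 0 < i) (h2 : i < j) (h3 : j < k) {x : ℕ}
    (hx : 1 ≤ x) (hxi : x ≠ i) (hxq : x ≠ k+i-j) (hxk : x ≠ k) :
    tau i j k (x-1) + 1 = tau i j k x := by
  simp only [tau]; split_ifs <;> omega

lemma tau_zero (h1 : 0 < i) : tau i j k 0 = 0 := by
  simp only [tau]; split_ifs <;> omega

lemma tau_pos (h1 : 0 < i) (h2 : i < j) (h3 : j < k) {x : ℕ} (hx : 1 ≤ x) :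
    1 ≤ tau i j k x := by
  simp only [tau]; split_ifs <;> omega

lemma tau_le (h2 : i < j) (h3 : j < k) (hk : k ≤ n) {x : ℕ} (hx : x ≤ n) :
    tau i j k x ≤ n := by
  simp only [tau]; split_ifs <;> omega

lemma tau_inj (h1 : 0 < i) (h2 : i < j) (h3 : j < k) :
    Function.Injective (tau i j k) := by
  intro a b hab
  have ha := tau_invl h1 h2 h3 a
  rw [hab, tau_invl h1 h2 h3 b] at ha; omega

lemma tau_at_i (h1 : 0 < i) (h2 : i < j) (h3 : j < k) : tau i j k i = j := by
  simp only [tau]; split_ifs <;> omega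

lemma tau_at_q (h1 : 0 < i) (h2 : i < j) (h3 : j < k) : tau i j k (k+i-j) = i := by
  simp only [tau]; split_ifs <;> omega

lemma tau_at_k (h1 : 0 < i) (h2 : i < j) (h3 : j < k) : tau i j k k = k := by
  simp only [tau]; split_ifs <;> omega

lemma tau_at_i' (h1 : 0 < i) (h2 : i < j) (h3 : j < k) : tau i j k (i-1) = i-1 := by
  simp only [tau]; split_ifs <;> omega

lemma tau_at_q' (h1 : 0 < i) (h2 : i < j) (h3 : j < k) : tau i j k (k+i-j-1) = k-1 := by
  simp only [tau]; split_ifs <;> omega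

lemma tau_at_k' (h1 : 0 < i) (h2 : i < j) (h3 : j < k) : tau i j k (k-1) = j-1 := by
  simp only [tau]; split_ifs <;> omega

end TauAux

section DbAux

variable {i j k n : ℕ}

lemma db_congr {f g : ℕ → ℕ} (h : ∀ x ≤ n, f x = g x) : db n f = db n g := by
  unfold db
  apply congrArg Finset.card
  apply Finset.filter_congr
  intro x hx
  simp only [Finset.mem_Icc] at hx
  rw [h x hx.2, h (x-1) (by omega)]

lemma db_of_id {π : ℕ → ℕ} (h : ∀ x ≤ n, π x = x) : db n π = 0 := by
  unfold db
  rw [Finset.card_eq_zero, Finset.filter_eq_empty_iff]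
  intro x hx
  simp only [Finset.mem_Icc] at hx
  rw [h x hx.2, h (x-1) (by omega)]
  omega

lemma card_triple_le : ({i, j, k} : Finset ℕ).card ≤ 3 := by
  apply le_trans (Finset.card_insert_le _ _)
  have := Finset.card_insert_le j ({k} : Finset ℕ)
  simp at this ⊢
  omega

lemma db_comp_le (h1 : 0 < i) (h2 : i < j) (h3 : j < k) (hk : k ≤ n) (π : ℕ → ℕ) :
    db n (fun x => π (tau i j k x)) ≤ db n π + 3 := by
  classical
  have hdb' : db n (fun x => π (tau i j k x)) =
      ((Finset.Icc 1 n).filter fun x => π (tau i j k x) ≠ π (tau i j k (x-1)) + 1).card := rfl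
  have hdbp : db n π = ((Finset.Icc 1 n).filter fun x => π x ≠ π (x-1) + 1).card := rfl
  set B' := (Finset.Icc 1 n).filter fun x => π (tau i j k x) ≠ π (tau i j k (x-1)) + 1 with hB'
  set S : Finset ℕ := {i, k+i-j, k} with hS
  have hcard : (B' \ S).card ≤ ((Finset.Icc 1 n).filter fun x => π x ≠ π (x-1) + 1).card := by
    apply Finset.card_le_card_of_injOn (tau i j k)
    · intro x hx
      simp only [Finset.mem_coe, hB', hS, Finset.mem_sdiff, Finset.mem_filter, Finset.mem_Icc,
        Finset.mem_insert, Finset.mem_singleton] at hx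
      obtain ⟨⟨⟨hx1, hxn⟩, hbp⟩, hxS⟩ := hx
      push_neg at hxS
      have hs := tau_succ h1 h2 h3 hx1 hxS.1 hxS.2.1 hxS.2.2
      have hrw : tau i j k (x-1) = tau i j k x - 1 := by omega
      rw [hrw] at hbp
      refine Finset.mem_filter.mpr ⟨Finset.mem_Icc.mpr
        ⟨tau_pos h1 h2 h3 hx1, tau_le h2 h3 hk hxn⟩, hbp⟩
    · intro a _ b _ hab
      exact tau_inj h1 h2 h3 hab
  have h3' : S.card ≤ 3 := card_triple_le
  have := Finset.card_le_card_sdiff_add_card (s := B') (t := S)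
  omega

lemma db_comp_ge (h1 : 0 < i) (h2 : i < j) (h3 : j < k) (hk : k ≤ n) (π : ℕ → ℕ) :
    db n π ≤ db n (fun x => π (tau i j k x)) + 3 := by
  have h2' : i < k+i-j := by omega
  have h3' : k+i-j < k := by omega
  have key := db_comp_le (n := n) h1 h2' h3' hk (fun x => π (tau i j k x))
  have heq : db n π = db n (fun y => π (tau i j k (tau i (k+i-j) k y))) :=
    db_congr (fun x _ => by rw [tau_invr h1 h2 h3])
  exact heq ▸ key

lemma db_le_of_sorts {n m : ℕ} {π : ℕ → ℕ} (h : SortsIn n π m) : db n π ≤ 3 * m := by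
  obtain ⟨L, hlen, htr, hsort⟩ := h
  subst hlen
  induction L using List.reverseRecOn generalizing π with
  | nil =>
    simp only [List.foldl_nil] at hsort
    simp [db_of_id hsort]
  | append_singleton L u ih =>
    have hu : IsTransp n u := htr u (by simp)
    obtain ⟨h1, h2, h3, h4⟩ := hu
    have hsort' : ∀ x ≤ n, (fun y => π (tau u.1 u.2.1 u.2.2 y)) (L.foldl (fun y t => tau t.1 t.2.1 t.2.2 y) x) = x := by
      intro x hx
      have := hsort x hx
      rwa [List.foldl_append, List.foldl_cons, List.foldl_nil] at this
    have hIH := ih (π := fun y => π (tau u.1 u.2.1 u.2.2 y)) (fun t htl => htr t (by simp [htl])) hsort'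
    have := db_comp_ge (n := n) h1 h2 h3 h4 π
    simp only [List.length_append, List.length_cons, List.length_nil]
    omega

end DbAux

section TDTAux

variable {α : Type*} [DecidableEq α] {n : ℕ}

lemma trElems_card {I : TDT α n} {t : α × α × α} (ht : t ∈ I.T) :
    (trElems t).card = 3 := by
  obtain ⟨hab, hac, hbc⟩ := I.nodup_T t ht
  unfold trElems
  rw [Finset.card_insert_of_notMem (by simp [hab, hac]),
    Finset.card_insert_of_notMem (by simp [hbc]), Finset.card_singleton]

lemma sig_card (I : TDT α n) : I.Sig.card = 3 * I.T.card := by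
  classical
  have hSig : I.Sig = I.T.biUnion trElems := by
    ext σ
    simp only [Finset.mem_biUnion]
    constructor
    · exact fun h => I.cover σ h
    · rintro ⟨t, ht, hσ⟩
      have hm := I.mem_T t ht
      simp only [trElems, Finset.mem_insert, Finset.mem_singleton] at hσ
      rcases hσ with h|h|h <;> subst h <;> tauto
  rw [hSig, Finset.card_biUnion (fun t ht t' ht' hne => I.disj_T t ht t' ht' hne)]
  rw [Finset.sum_congr rfl (fun t ht => trElems_card ht), Finset.sum_const, smul_eq_mul,
    mul_comm]

lemma dom_card (I : TDT α n) : I.dom.card = 3 * I.T.card := by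
  rw [TDT.dom, Finset.card_image_of_injOn I.psi_inj, sig_card]

lemma pi_inj {π : ℕ → ℕ} (hbij : Set.BijOn π (Set.Icc 0 n) (Set.Icc 0 n)) :
    ∀ u v : ℕ, u ≤ n → v ≤ n → π u = π v → u = v := by
  intro u v hu hv huv
  exact hbij.injOn (by simp [Set.mem_Icc, hu]) (by simp [Set.mem_Icc, hv]) huv

lemma breakpoints_eq (I : TDT α n) {π : ℕ → ℕ} (hperm : EquivPerm I π)
    (hbij : Set.BijOn π (Set.Icc 0 n) (Set.Icc 0 n)) :
    ((Finset.Icc 1 n).filter fun x => π x ≠ π (x-1) + 1) = I.dom := by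
  have hinj := pi_inj hbij
  ext x
  simp only [Finset.mem_filter, Finset.mem_Icc]
  constructor
  · rintro ⟨⟨hx1, hxn⟩, hbp⟩
    by_contra hx
    exact hbp (hperm.2.1 x hx1 hxn hx)
  · intro hx
    obtain ⟨σ, hσ, hψ⟩ := Finset.mem_image.mp hx
    have hmem := I.psi_mem σ hσ
    simp only [Finset.mem_Icc] at hmem
    refine ⟨⟨by omega, by omega⟩, ?_⟩
    obtain ⟨t, ht, hσt⟩ := I.cover σ hσ
    obtain ⟨ha, hb, hc⟩ := I.mem_T t ht
    obtain ⟨e1, e2, e3⟩ := hperm.2.2 t ht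
    obtain ⟨n1, n2, n3⟩ := I.nodup_T t ht
    have hma := I.psi_mem _ ha; have hmb := I.psi_mem _ hb; have hmc := I.psi_mem _ hc
    simp only [Finset.mem_Icc] at hma hmb hmc
    intro hadj
    simp only [trElems, Finset.mem_insert, Finset.mem_singleton] at hσt
    rcases hσt with h|h|h <;> subst h
    · rw [hψ] at e1
      have : I.psi t.2.1 = I.psi t.1 := by
        apply hinj _ _ (by omega) (by omega); rw [e1, ← hadj, hψ]
      exact n1 (I.psi_inj ha hb this.symm)
    · rw [hψ] at e2
      have : I.psi t.2.2 = I.psi t.2.1 := by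
        apply hinj _ _ (by omega) (by omega); rw [e2, ← hadj, hψ]
      exact n3 (I.psi_inj hb hc this.symm)
    · rw [hψ] at e3
      have : I.psi t.1 = I.psi t.2.2 := by
        apply hinj _ _ (by omega) (by omega); rw [e3, ← hadj, hψ]
      exact n2 (I.psi_inj ha hc this)
  
lemma db_eq (I : TDT α n) {π : ℕ → ℕ} (hperm : EquivPerm I π)
    (hbij : Set.BijOn π (Set.Icc 0 n) (Set.Icc 0 n)) :
    db n π = 3 * I.T.card := by
  rw [db, breakpoints_eq I hperm hbij, dom_card]

lemma wo_facts (I : TDT α n) {π : ℕ → ℕ} {t : α × α × α}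
    (ht : t ∈ I.T) (hwo : I.WellOrderedT t) (hperm : EquivPerm I π) :
    ∃ i j k, min3 (I.psi t.1) (I.psi t.2.1) (I.psi t.2.2) = i ∧
      mid3 (I.psi t.1) (I.psi t.2.1) (I.psi t.2.2) = j ∧
      max3 (I.psi t.1) (I.psi t.2.1) (I.psi t.2.2) = k ∧
      0 < i ∧ i < j ∧ j < k ∧ k ≤ n ∧
      π j = π (i-1) + 1 ∧ π i = π (k-1) + 1 ∧ π k = π (j-1) + 1 ∧
      (∀ x, (x = I.psi t.1 ∨ x = I.psi t.2.1 ∨ x = I.psi t.2.2) ↔ (x = i ∨ x = j ∨ x = k)) := by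
  obtain ⟨ha, hb, hc⟩ := I.mem_T t ht
  obtain ⟨e1, e2, e3⟩ := hperm.2.2 t ht
  have hma := I.psi_mem _ ha; have hmb := I.psi_mem _ hb; have hmc := I.psi_mem _ hc
  simp only [Finset.mem_Icc] at hma hmb hmc
  rcases hwo with ⟨h1, h2⟩ | ⟨h1, h2⟩ | ⟨h1, h2⟩
  · exact ⟨I.psi t.1, I.psi t.2.1, I.psi t.2.2,
      by unfold min3; omega, by unfold mid3 min3 max3; omega, by unfold max3; omega,
      by omega, h1, h2, by omega, e1, e3, e2, fun x => by tauto⟩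
  · exact ⟨I.psi t.2.1, I.psi t.2.2, I.psi t.1,
      by unfold min3; omega, by unfold mid3 min3 max3; omega, by unfold max3; omega,
      by omega, h1, h2, by omega, e2, e1, e3, fun x => by tauto⟩
  · exact ⟨I.psi t.2.2, I.psi t.1, I.psi t.2.1,
      by unfold min3; omega, by unfold mid3 min3 max3; omega, by unfold max3; omega,
      by omega, h1, h2, by omega, e3, e2, e1, fun x => by tauto⟩

lemma find_triple (I : TDT α n) {π : ℕ → ℕ} {i j k : ℕ}
    (hperm : EquivPerm I π) (hbij : Set.BijOn π (Set.Icc 0 n) (Set.Icc 0 n))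
    (h1 : 0 < i) (h2 : i < j) (h3 : j < k) (hkn : k ≤ n)
    (e1 : π j = π (i-1) + 1) (e2 : π i = π (k-1) + 1) (e3 : π k = π (j-1) + 1) :
    ∃ t ∈ I.T, I.WellOrderedT t ∧
      min3 (I.psi t.1) (I.psi t.2.1) (I.psi t.2.2) = i ∧
      mid3 (I.psi t.1) (I.psi t.2.1) (I.psi t.2.2) = j ∧
      max3 (I.psi t.1) (I.psi t.2.1) (I.psi t.2.2) = k := by
  have hinj := pi_inj hbij
  have hidom : i ∈ I.dom := by
    by_contra hx
    have := hperm.2.1 i (by omega) (by omega) hx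
    have : j = i := hinj j i (by omega) (by omega) (by omega)
    omega
  obtain ⟨σ, hσ, hψ⟩ := Finset.mem_image.mp hidom
  obtain ⟨t, ht, hσt⟩ := I.cover σ hσ
  obtain ⟨ha, hb, hc⟩ := I.mem_T t ht
  obtain ⟨E1, E2, E3⟩ := hperm.2.2 t ht
  have hma := I.psi_mem _ ha; have hmb := I.psi_mem _ hb; have hmc := I.psi_mem _ hc
  simp only [Finset.mem_Icc] at hma hmb hmc
  refine ⟨t, ht, ?_⟩
  simp only [trElems, Finset.mem_insert, Finset.mem_singleton] at hσt
  rcases hσt with h|h|h <;> subst h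
  · -- ψ t.1 = i
    rw [hψ] at E1
    have hq : I.psi t.2.1 = j := hinj _ _ (by omega) (by omega) (by omega)
    rw [hq] at E2
    have hr : I.psi t.2.2 = k := hinj _ _ (by omega) (by omega) (by omega)
    refine ⟨?_, ?_, ?_, ?_⟩
    · unfold TDT.WellOrderedT WellOrdered3; rw [hψ, hq, hr]; omega
    · unfold min3; omega
    · unfold mid3 min3 max3; omega
    · unfold max3; omega
  · -- ψ t.2.1 = i
    rw [hψ] at E2
    have hr : I.psi t.2.2 = j := hinj _ _ (by omega) (by omega) (by omega)
    rw [hr] at E3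
    have hp : I.psi t.1 = k := hinj _ _ (by omega) (by omega) (by omega)
    refine ⟨?_, ?_, ?_, ?_⟩
    · unfold TDT.WellOrderedT WellOrdered3; rw [hψ, hr, hp]; omega
    · unfold min3; omega
    · unfold mid3 min3 max3; omega
    · unfold max3; omega
  · -- ψ t.2.2 = i
    rw [hψ] at E3
    have hp : I.psi t.1 = j := hinj _ _ (by omega) (by omega) (by omega)
    rw [hp] at E1
    have hq : I.psi t.2.1 = k := hinj _ _ (by omega) (by omega) (by omega)
    refine ⟨?_, ?_, ?_, ?_⟩
    · unfold TDT.WellOrderedT WellOrdered3; rw [hψ, hp, hq]; omega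
    · unfold min3; omega
    · unfold mid3 min3 max3; omega
    · unfold max3; omega

end TDTAux

section StepAux

variable {α : Type*} [DecidableEq α] {n : ℕ}

lemma exists_step (I : TDT α n) {t : α × α × α} {i j k : ℕ}
    (ht : t ∈ I.T) (hwo : I.WellOrderedT t)
    (hi : min3 (I.psi t.1) (I.psi t.2.1) (I.psi t.2.2) = i)
    (hj : mid3 (I.psi t.1) (I.psi t.2.1) (I.psi t.2.2) = j)
    (hk : max3 (I.psi t.1) (I.psi t.2.1) (I.psi t.2.2) = k)
    (h1 : 0 < i) (h2 : i < j) (h3 : j < k) (hn : k ≤ n) :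
    ∃ I' : TDT α n, StepT t I I' := by
  classical
  have h2' : i < k+i-j := by omega
  have h3' : k+i-j < k := by omega
  have htinv : ∀ x, I.tauOfInv t x = tau i (k+i-j) k x := by
    intro x
    unfold TDT.tauOfInv tauInvStep tauInv
    rw [hi, hj, hk]
  have hdisj : ∀ t' ∈ I.T.erase t, ∀ x ∈ trElems t', x ∉ trElems t := by
    intro t' ht' x hx hx'
    have hd := I.disj_T t ht t' (Finset.mem_of_mem_erase ht')
      (Ne.symm (Finset.ne_of_mem_erase ht'))
    exact (Finset.disjoint_left.mp hd hx') hx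
  refine ⟨⟨I.Sig \ trElems t, I.T.erase t, fun σ => I.tauOfInv t (I.psi σ),
    ?_, ?_, ?_, ?_, ?_, ?_⟩, ht, hwo, rfl, rfl, fun σ _ => rfl⟩
  · intro t' ht'
    have htT := Finset.mem_of_mem_erase ht'
    obtain ⟨ha, hb, hc⟩ := I.mem_T t' htT
    have h' := hdisj t' ht'
    refine ⟨Finset.mem_sdiff.mpr ⟨ha, h' _ (by simp [trElems])⟩,
      Finset.mem_sdiff.mpr ⟨hb, h' _ (by simp [trElems])⟩,
      Finset.mem_sdiff.mpr ⟨hc, h' _ (by simp [trElems])⟩⟩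
  · intro σ hσ
    obtain ⟨hσS, hσt⟩ := Finset.mem_sdiff.mp hσ
    obtain ⟨t', ht', hm⟩ := I.cover σ hσS
    have hne : t' ≠ t := fun h => hσt (h ▸ hm)
    exact ⟨t', Finset.mem_erase.mpr ⟨hne, ht'⟩, hm⟩
  · exact fun t' ht' => I.nodup_T t' (Finset.mem_of_mem_erase ht')
  · exact fun t' ht' t'' ht'' h =>
      I.disj_T t' (Finset.mem_of_mem_erase ht') t'' (Finset.mem_of_mem_erase ht'') h
  · intro σ hσ
    have hσS := (Finset.mem_sdiff.mp hσ).1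
    have hm := I.psi_mem σ hσS
    simp only [Finset.mem_Icc] at hm ⊢
    rw [htinv]
    exact ⟨tau_pos h1 h2' h3' hm.1, tau_le h2' h3' hn hm.2⟩
  · intro σ hσ σ' hσ' hEq
    simp only [Finset.coe_sdiff, Set.mem_diff, Finset.mem_coe] at hσ hσ'
    simp only [htinv] at hEq
    exact I.psi_inj hσ.1 hσ'.1 (tau_inj h1 h2' h3' hEq)

lemma step_equiv {I I' : TDT α n} {t : α × α × α} {π : ℕ → ℕ}
    (hstep : StepT t I I') (hperm : EquivPerm I π)
    (hbij : Set.BijOn π (Set.Icc 0 n) (Set.Icc 0 n)) :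
    ∃ i j k : ℕ,
      min3 (I.psi t.1) (I.psi t.2.1) (I.psi t.2.2) = i ∧
      mid3 (I.psi t.1) (I.psi t.2.1) (I.psi t.2.2) = j ∧
      max3 (I.psi t.1) (I.psi t.2.1) (I.psi t.2.2) = k ∧
      0 < i ∧ i < j ∧ j < k ∧ k ≤ n ∧
      EquivPerm I' (fun x => π (tau i j k x)) ∧
      Set.BijOn (fun x => π (tau i j k x)) (Set.Icc 0 n) (Set.Icc 0 n) ∧
      I'.T.card + 1 = I.T.card := by
  obtain ⟨ht, hwo, hSig, hT, hpsi⟩ := hstep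
  obtain ⟨i, j, k, hi, hj, hk, h1, h2, h3, hn, e1, e2, e3, hset⟩ := wo_facts I ht hwo hperm
  have h2' : i < k+i-j := by omega
  have h3' : k+i-j < k := by omega
  have htinv : ∀ x, I.tauOfInv t x = tau i (k+i-j) k x := by
    intro x
    unfold TDT.tauOfInv tauInvStep tauInv
    rw [hi, hj, hk]
  have hpsi' : ∀ σ ∈ I'.Sig, I'.psi σ = tau i (k+i-j) k (I.psi σ) := by
    intro σ hσ; rw [hpsi σ hσ, htinv]
  obtain ⟨ha, hb, hc⟩ := I.mem_T t ht
  have hma := I.psi_mem _ ha; have hmb := I.psi_mem _ hb; have hmc := I.psi_mem _ hc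
  simp only [Finset.mem_Icc] at hma hmb hmc
  have hinvl := tau_invl h1 h2 h3
  have hinvr := tau_invr h1 h2 h3
  refine ⟨i, j, k, hi, hj, hk, h1, h2, h3, hn, ⟨?_, ?_, ?_⟩, ?_, ?_⟩
  · -- π (tau 0) = 0
    show π (tau i j k 0) = 0
    rw [tau_zero h1, hperm.1]
  · -- non-domain positions
    intro v hv1 hvn hvdom
    show π (tau i j k v) = π (tau i j k (v-1)) + 1
    by_cases hvi : v = i
    · subst hvi
      rw [tau_at_i h1 h2 h3, tau_at_i' h1 h2 h3]; exact e1
    by_cases hvq : v = k+i-j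
    · subst hvq
      rw [tau_at_q h1 h2 h3, tau_at_q' h1 h2 h3]; exact e2
    by_cases hvk : v = k
    · subst hvk
      rw [tau_at_k h1 h2 h3, tau_at_k' h1 h2 h3]; exact e3
    have hs := tau_succ h1 h2 h3 hv1 hvi hvq hvk
    have hrw : tau i j k (v-1) = tau i j k v - 1 := by omega
    have hw1 : 1 ≤ tau i j k v := tau_pos h1 h2 h3 hv1
    have hwn : tau i j k v ≤ n := tau_le h2 h3 hn hvn
    rw [hrw]
    by_cases hw : tau i j k v ∈ I.dom
    · obtain ⟨σ, hσ, hψ⟩ := Finset.mem_image.mp hw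
      by_cases hσt : σ ∈ trElems t
      · exfalso
        simp only [trElems, Finset.mem_insert, Finset.mem_singleton] at hσt
        have : tau i j k v = i ∨ tau i j k v = j ∨ tau i j k v = k := by
          apply (hset _).mp
          rcases hσt with h|h|h <;> subst h <;> tauto
        rcases this with h|h|h
        · exact hvq (tau_inj h1 h2 h3 (by rw [h, tau_at_q h1 h2 h3]))
        · exact hvi (tau_inj h1 h2 h3 (by rw [h, tau_at_i h1 h2 h3]))
        · exact hvk (tau_inj h1 h2 h3 (by rw [h, tau_at_k h1 h2 h3]))
      · exfalso
        have hσ' : σ ∈ I'.Sig := by rw [hSig]; exact Finset.mem_sdiff.mpr ⟨hσ, hσt⟩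
        apply hvdom
        apply Finset.mem_image.mpr
        exact ⟨σ, hσ', by rw [hpsi' σ hσ', hψ, hinvl]⟩
    · exact hperm.2.1 _ hw1 hwn hw
  · -- triples of I'
    intro t' ht'
    rw [hT] at ht'
    have htT := Finset.mem_of_mem_erase ht'
    have hne : t' ≠ t := Finset.ne_of_mem_erase ht'
    obtain ⟨E1, E2, E3⟩ := hperm.2.2 t' htT
    obtain ⟨ha', hb', hc'⟩ := I.mem_T t' htT
    have hd := I.disj_T t ht t' htT (Ne.symm hne)
    have hnott : ∀ x ∈ trElems t', x ∉ trElems t :=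
      fun x hx hx' => (Finset.disjoint_left.mp hd hx') hx
    have hSig' : I'.Sig = I.Sig \ trElems t := hSig
    have key : ∀ x, x ∈ I.Sig → x ∉ trElems t →
        π (tau i j k (tau i (k+i-j) k (I.psi x))) = π (I.psi x) ∧
        tau i j k (tau i (k+i-j) k (I.psi x) - 1) = I.psi x - 1 := by
      intro x hxS hxt
      have hmx := I.psi_mem x hxS
      simp only [Finset.mem_Icc] at hmx
      refine ⟨by rw [hinvr], ?_⟩
      have hu1 : 1 ≤ tau i (k+i-j) k (I.psi x) := tau_pos h1 h2' h3' hmx.1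
      have hnotijk : ¬ (I.psi x = i ∨ I.psi x = j ∨ I.psi x = k) := by
        intro hor
        have := (hset _).mpr hor
        apply hxt
        simp only [trElems, Finset.mem_insert, Finset.mem_singleton]
        rcases this with h|h|h
        · exact Or.inl (I.psi_inj hxS ha h)
        · exact Or.inr (Or.inl (I.psi_inj hxS hb h))
        · exact Or.inr (Or.inr (I.psi_inj hxS hc h))
      have hui : tau i (k+i-j) k (I.psi x) ≠ i := by
        intro h
        exact hnotijk (Or.inr (Or.inl (by rw [← hinvr (I.psi x), h, tau_at_i h1 h2 h3])))
      have huq : tau i (k+i-j) k (I.psi x) ≠ k+i-j := by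
        intro h
        exact hnotijk (Or.inl (by rw [← hinvr (I.psi x), h, tau_at_q h1 h2 h3]))
      have huk : tau i (k+i-j) k (I.psi x) ≠ k := by
        intro h
        exact hnotijk (Or.inr (Or.inr (by rw [← hinvr (I.psi x), h, tau_at_k h1 h2 h3])))
      have := tau_succ h1 h2 h3 hu1 hui huq huk
      rw [hinvr] at this
      omega
    have hmem' : ∀ x ∈ trElems t', x ∈ I'.Sig := by
      intro x hx
      rw [hSig']
      refine Finset.mem_sdiff.mpr ⟨?_, hnott x hx⟩
      simp only [trElems, Finset.mem_insert, Finset.mem_singleton] at hx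
      rcases hx with h|h|h <;> subst h <;> assumption
    have ma : t'.1 ∈ I'.Sig := hmem' _ (by simp [trElems])
    have mb : t'.2.1 ∈ I'.Sig := hmem' _ (by simp [trElems])
    have mc : t'.2.2 ∈ I'.Sig := hmem' _ (by simp [trElems])
    have ka := key t'.1 ha' (hnott _ (by simp [trElems]))
    have kb := key t'.2.1 hb' (hnott _ (by simp [trElems]))
    have kc := key t'.2.2 hc' (hnott _ (by simp [trElems]))
    refine ⟨?_, ?_, ?_⟩
    · show π (tau i j k (I'.psi t'.2.1)) = π (tau i j k (I'.psi t'.1 - 1)) + 1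
      rw [hpsi' _ mb, hpsi' _ ma, kb.1, ka.2, E1]
    · show π (tau i j k (I'.psi t'.2.2)) = π (tau i j k (I'.psi t'.2.1 - 1)) + 1
      rw [hpsi' _ mc, hpsi' _ mb, kc.1, kb.2, E2]
    · show π (tau i j k (I'.psi t'.1)) = π (tau i j k (I'.psi t'.2.2 - 1)) + 1
      rw [hpsi' _ ma, hpsi' _ mc, ka.1, kc.2, E3]
  · -- BijOn
    have htb : Set.BijOn (tau i j k) (Set.Icc 0 n) (Set.Icc 0 n) := by
      refine ⟨?_, ?_, ?_⟩
      · intro x hx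
        simp only [Set.mem_Icc] at hx ⊢
        exact ⟨Nat.zero_le _, tau_le h2 h3 hn hx.2⟩
      · intro x _ y _ hxy
        exact tau_inj h1 h2 h3 hxy
      · intro y hy
        simp only [Set.mem_Icc] at hy
        refine ⟨tau i (k+i-j) k y, ?_, hinvr y⟩
        simp only [Set.mem_Icc]
        exact ⟨Nat.zero_le _, tau_le h2' h3' hn hy.2⟩
    exact hbij.comp htb
  · rw [hT, Finset.card_erase_of_mem ht]
    have : 0 < I.T.card := Finset.card_pos.mpr ⟨t, ht⟩
    omega

lemma T_empty_of_sig_empty {J : TDT α n} (hS : J.Sig = ∅) : J.T = ∅ := by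
  rw [Finset.eq_empty_iff_forall_notMem]
  intro t ht
  have := (J.mem_T t ht).1
  rw [hS] at this
  exact absurd this (Finset.notMem_empty _)

lemma sig_empty_of_T_empty {J : TDT α n} (hT : J.T = ∅) : J.Sig = ∅ := by
  rw [Finset.eq_empty_iff_forall_notMem]
  intro σ hσ
  obtain ⟨t, ht, _⟩ := J.cover σ hσ
  rw [hT] at ht
  exact absurd ht (Finset.notMem_empty _)

lemma eq_id_of_empty {J : TDT α n} {π : ℕ → ℕ} (hperm : EquivPerm J π)
    (hS : J.Sig = ∅) : ∀ x ≤ n, π x = x := by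
  intro x
  induction x with
  | zero => exact fun _ => hperm.1
  | succ m ih =>
    intro h
    have hd : (m+1) ∉ J.dom := by simp [TDT.dom, hS]
    rw [hperm.2.1 (m+1) (by omega) h hd]
    simp only [Nat.add_sub_cancel]
    rw [ih (by omega)]

end StepAux

section MainAux

variable {α : Type*} [DecidableEq α] {n : ℕ}

lemma collapsible_sorts {I J : TDT α n}
    (hsteps : Relation.ReflTransGen (fun X Y => ∃ t, StepT t X Y) I J)
    (hJS : J.Sig = ∅) :
    ∀ π : ℕ → ℕ, EquivPerm I π → Set.BijOn π (Set.Icc 0 n) (Set.Icc 0 n) →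
      SortsIn n π I.T.card := by
  induction hsteps using Relation.ReflTransGen.head_induction_on with
  | refl =>
    intro π hperm hbij
    have hT := T_empty_of_sig_empty hJS
    rw [hT, Finset.card_empty]
    exact ⟨[], rfl, by simp, fun x hx => by
      simpa using eq_id_of_empty hperm hJS x hx⟩
  | head hstep _ ih =>
    rename_i I₁ I₂ _
    obtain ⟨t, hstep⟩ := hstep
    intro π hperm hbij
    obtain ⟨i, j, k, _, _, _, h1, h2, h3, hn, hperm', hbij', hcard⟩ :=
      step_equiv hstep hperm hbij
    obtain ⟨L, hlen, htr, hsort⟩ := ih _ hperm' hbij'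
    refine ⟨L ++ [(i, j, k)], ?_, ?_, ?_⟩
    · simp [hlen]; omega
    · intro u hu
      simp only [List.mem_append, List.mem_singleton] at hu
      rcases hu with hu | hu
      · exact htr u hu
      · subst hu
        exact ⟨h1, h2, h3, hn⟩
    · intro x hx
      rw [List.foldl_append, List.foldl_cons, List.foldl_nil]
      exact hsort x hx

lemma sorts_collapsible : ∀ (m : ℕ) (I : TDT α n) (π : ℕ → ℕ), I.T.card = m →
    EquivPerm I π → Set.BijOn π (Set.Icc 0 n) (Set.Icc 0 n) →
    SortsIn n π m → Collapsible I := by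
  intro m
  induction m with
  | zero =>
    intro I π hcard _ _ _
    have hT : I.T = ∅ := Finset.card_eq_zero.mp hcard
    exact ⟨I, Relation.ReflTransGen.refl, sig_empty_of_T_empty hT, hT⟩
  | succ m ih =>
    intro I π hcard hperm hbij hsorts
    classical
    have hdb : db n π = 3 * (m + 1) := by rw [db_eq I hperm hbij, hcard]
    obtain ⟨L, hlen, htr, hsort⟩ := hsorts
    rcases L.eq_nil_or_concat with hnil | ⟨L', u, hLc⟩
    · rw [hnil] at hlen; simp at hlen
    subst hLc
    rw [List.concat_eq_append] at hlen htr hsort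
    simp only [List.length_append, List.length_cons, List.length_nil] at hlen
    obtain ⟨h1, h2, h3, hn⟩ : IsTransp n u := htr u (by simp)
    set i := u.1 with hiu
    set j := u.2.1 with hju
    set k := u.2.2 with hku
    have h2' : i < k+i-j := by omega
    have h3' : k+i-j < k := by omega
    -- the remaining list sorts π ∘ τ_u
    have hsort2 : ∀ x ≤ n,
        (fun y => π (tau i j k y)) (L'.foldl (fun y t => tau t.1 t.2.1 t.2.2 y) x) = x := by
      intro x hx
      have := hsort x hx
      rwa [List.foldl_append, List.foldl_cons, List.foldl_nil] at this
    have hsorts2 : SortsIn n (fun y => π (tau i j k y)) m :=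
      ⟨L', by omega, fun v hv => htr v (by simp [hv]), hsort2⟩
    have hdb2 : db n (fun y => π (tau i j k y)) ≤ 3 * m := db_le_of_sorts hsorts2
    -- counting: positions i, k+i-j, k are all resolved
    have hBcard : ((Finset.Icc 1 n).filter (fun x => π x ≠ π (x-1) + 1)).card = 3 * (m+1) := hdb
    have hB'card : ((Finset.Icc 1 n).filter
      (fun x => π (tau i j k x) ≠ π (tau i j k (x-1)) + 1)).card ≤ 3 * m := hdb2
    set B := (Finset.Icc 1 n).filter (fun x => π x ≠ π (x-1) + 1) with hB
    set B' := (Finset.Icc 1 n).filter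
      (fun x => π (tau i j k x) ≠ π (tau i j k (x-1)) + 1) with hB'
    have hinj2 : (B \ ({i, j, k} : Finset ℕ)).card ≤ (B' \ ({i, k+i-j, k} : Finset ℕ)).card := by
      apply Finset.card_le_card_of_injOn (tau i (k+i-j) k)
      · intro x hx
        simp only [Finset.mem_coe, hB, Finset.mem_sdiff, Finset.mem_filter, Finset.mem_Icc,
          Finset.mem_insert, Finset.mem_singleton] at hx
        obtain ⟨⟨⟨hx1, hxn⟩, hbp⟩, hxS⟩ := hx
        push_neg at hxS
        have hyi : tau i (k+i-j) k x ≠ i := fun h =>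
          hxS.2.1 (by rw [← tau_invr h1 h2 h3 x, h, tau_at_i h1 h2 h3])
        have hyq : tau i (k+i-j) k x ≠ k+i-j := fun h =>
          hxS.1 (by rw [← tau_invr h1 h2 h3 x, h, tau_at_q h1 h2 h3])
        have hyk : tau i (k+i-j) k x ≠ k := fun h =>
          hxS.2.2 (by rw [← tau_invr h1 h2 h3 x, h, tau_at_k h1 h2 h3])
        have hy1 : 1 ≤ tau i (k+i-j) k x := tau_pos h1 h2' h3' hx1
        have hyn : tau i (k+i-j) k x ≤ n := tau_le h2' h3' hn hxn
        have hstep := tau_succ h1 h2 h3 hy1 hyi hyq hyk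
        rw [tau_invr h1 h2 h3] at hstep
        have hnotS : tau i (k+i-j) k x ∉ ({i, k+i-j, k} : Finset ℕ) := by
          simp only [Finset.mem_insert, Finset.mem_singleton]
          push_neg
          exact ⟨hyi, hyq, hyk⟩
        refine Finset.mem_sdiff.mpr ⟨Finset.mem_filter.mpr ⟨Finset.mem_Icc.mpr ⟨hy1, hyn⟩, ?_⟩, hnotS⟩
        rw [tau_invr h1 h2 h3]
        have hxx : tau i j k (tau i (k+i-j) k x - 1) = x - 1 := by omega
        rw [hxx]
        exact hbp
      · intro a _ b _ hab
        exact tau_inj h1 h2' h3' hab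
    have hBsdiff : 3 * m ≤ (B \ ({i, j, k} : Finset ℕ)).card := by
      have hle := Finset.le_card_sdiff ({i, j, k} : Finset ℕ) B
      have := card_triple_le (i := i) (j := j) (k := k)
      omega
    have hinter : (B' ∩ ({i, k+i-j, k} : Finset ℕ)).card = 0 := by
      have hs := Finset.card_sdiff_add_card_inter B' ({i, k+i-j, k} : Finset ℕ)
      have hle : (B' \ ({i, k+i-j, k} : Finset ℕ)).card ≤ B'.card :=
        Finset.card_le_card (Finset.sdiff_subset)
      omega
    have hnotB' : ∀ x ∈ ({i, k+i-j, k} : Finset ℕ), x ∉ B' := by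
      intro x hx hxB
      have : x ∈ B' ∩ ({i, k+i-j, k} : Finset ℕ) := Finset.mem_inter.mpr ⟨hxB, hx⟩
      rw [Finset.card_eq_zero] at hinter
      rw [hinter] at this
      exact absurd this (Finset.notMem_empty _)
    have hadj : ∀ x ∈ ({i, k+i-j, k} : Finset ℕ),
        π (tau i j k x) = π (tau i j k (x-1)) + 1 := by
      intro x hx
      have := hnotB' x hx
      simp only [hB', Finset.mem_filter, Finset.mem_Icc, not_and, not_not] at this
      apply this
      simp only [Finset.mem_insert, Finset.mem_singleton] at hx
      omega
    have e1 : π j = π (i-1) + 1 := by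
      have := hadj i (by simp)
      rwa [tau_at_i h1 h2 h3, tau_at_i' h1 h2 h3] at this
    have e2 : π i = π (k-1) + 1 := by
      have := hadj (k+i-j) (by simp)
      rwa [tau_at_q h1 h2 h3, tau_at_q' h1 h2 h3] at this
    have e3 : π k = π (j-1) + 1 := by
      have := hadj k (by simp)
      rwa [tau_at_k h1 h2 h3, tau_at_k' h1 h2 h3] at this
    obtain ⟨t, ht, hwo, hmin, hmid, hmax⟩ :=
      find_triple I hperm hbij h1 h2 h3 hn e1 e2 e3
    obtain ⟨I', hstep⟩ := exists_step I ht hwo hmin hmid hmax h1 h2 h3 hn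
    obtain ⟨i', j', k', hmin', hmid', hmax', _, _, _, _, hperm', hbij', hcard'⟩ :=
      step_equiv hstep hperm hbij
    have hii : i' = i := by rw [← hmin', hmin]
    have hjj : j' = j := by rw [← hmid', hmid]
    have hkk : k' = k := by rw [← hmax', hmax]
    subst hii; subst hjj; subst hkk
    have hcol' := ih I' (fun y => π (tau i j k y)) (by omega) hperm' hbij' hsorts2
    obtain ⟨Jf, hs, hS, hT⟩ := hcol'
    exact ⟨Jf, Relation.ReflTransGen.head ⟨t, hstep⟩ hs, hS, hT⟩

end MainAux

/-- Theorem 1 of the paper.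
Let `I = ⟨Σ,T,ψ⟩` be a 3DT-instance of span `n` and `π` a permutation of
`{0,…,n}` with `I ∼ π`. Then `I` is 3DT-collapsible iff
`d_t(π) = |T| = d_b(π)/3`. -/
theorem stmt7 {α : Type*} [DecidableEq α] {n : ℕ} (I : TDT α n) (π : ℕ → ℕ)
    (hbij : Set.BijOn π (Set.Icc 0 n) (Set.Icc 0 n))
    (heq : EquivPerm I π) :
    Collapsible I ↔
      IsLeast {m | SortsIn n π m} I.T.card ∧ I.T.card = db n π / 3 := by
  have hdb : db n π = 3 * I.T.card := db_eq I heq hbij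
  constructor
  · intro hcol
    obtain ⟨J, hsteps, hJS, hJT⟩ := hcol
    have hsorts := collapsible_sorts hsteps hJS π heq hbij
    refine ⟨⟨hsorts, ?_⟩, by omega⟩
    intro m hm
    have := db_le_of_sorts hm
    omega
  · rintro ⟨⟨hmem, _⟩, _⟩
    exact sorts_collapsible I.T.card I π rfl heq hbij hmem
end
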